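/- arXiv:0711.0111 — 3 statements merged into one kernel-verified Lean document; each statement's English description precedes it below -/
import Mathlib

section
/- Let φ be a CP-semigroup on a von Neumann algebra M ⊆ B(H). Then φ is continuous in the point-strong operator topology: for every A ∈ M, every ξ ∈ H and every t₀ ≥ 0, lim_{t→t₀} ‖φ_t(A)ξ − φ_{t₀}(A)ξ‖ = 0 (two-sided limit, with t ranging over [0,∞)). -/
open scoped InnerProductSpace ComplexOrder
open Filter Topology MeasureTheory

/-- A functional `ω` on `B(H)` is *σ-weakly continuous on `M`* if on `M` it agrees with a
functional of the form `X ↦ ∑ₙ ⟪ξₙ, X ηₙ⟫` with `∑ ‖ξₙ‖² < ∞` and `∑ ‖ηₙ‖² < ∞`. -/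
def NormalFunctionalOn {H : Type*} [NormedAddCommGroup H] [InnerProductSpace ℂ H]
    [CompleteSpace H] (M : Set (H →L[ℂ] H)) (ω : (H →L[ℂ] H) → ℂ) : Prop :=
  ∃ ξ η : ℕ → H, (Summable fun n => ‖ξ n‖ ^ 2) ∧ (Summable fun n => ‖η n‖ ^ 2) ∧
    ∀ X ∈ M, ω X = ∑' n, ⟪ξ n, X (η n)⟫_ℂ

/-- A sequence of operators converges in the σ-strong* topology. -/
def SigmaStrongStarTendsto {H : Type*} [NormedAddCommGroup H] [InnerProductSpace ℂ H]
    [CompleteSpace H] (A : ℕ → H →L[ℂ] H) (L : H →L[ℂ] H) : Prop :=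
  ∀ ξ : ℕ → H, (Summable fun k => ‖ξ k‖ ^ 2) →
    Filter.Tendsto
      (fun n => (∑' k, ‖A n (ξ k) - L (ξ k)‖ ^ 2) +
        ∑' k, ‖star (A n) (ξ k) - star L (ξ k)‖ ^ 2)
      Filter.atTop (nhds 0)

/-- A sequence of operators converges in the σ-weak topology. -/
def SigmaWeakTendsto {H : Type*} [NormedAddCommGroup H] [InnerProductSpace ℂ H]
    [CompleteSpace H] (A : ℕ → H →L[ℂ] H) (L : H →L[ℂ] H) : Prop :=
  ∀ ξ η : ℕ → H, (Summable fun k => ‖ξ k‖ ^ 2) → (Summable fun k => ‖η k‖ ^ 2) →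
    Filter.Tendsto (fun n => ∑' k, ⟪ξ k, A n (η k)⟫_ℂ)
      Filter.atTop (nhds (∑' k, ⟪ξ k, L (η k)⟫_ℂ))

/-- A CP-semigroup on a von Neumann algebra `M ⊆ B(H)`: a semigroup `{φ_t}_{t ≥ 0}` of
contractive, normal, completely positive linear maps of `M` into itself, with `φ₀ = id`,
which is continuous in the point-weak operator topology. -/
structure CPSemigroup {H : Type*} [NormedAddCommGroup H] [InnerProductSpace ℂ H]
    [CompleteSpace H] (M : VonNeumannAlgebra H) where
  φ : ℝ → (H →L[ℂ] H) →ₗ[ℂ] (H →L[ℂ] H)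
  mapsTo : ∀ t : ℝ, 0 ≤ t → ∀ A ∈ M, φ t A ∈ M
  contractive : ∀ t : ℝ, 0 ≤ t → ∀ A ∈ M, ‖φ t A‖ ≤ ‖A‖
  normal : ∀ t : ℝ, 0 ≤ t → ∀ ω : (H →L[ℂ] H) → ℂ,
    NormalFunctionalOn (M : Set (H →L[ℂ] H)) ω →
    NormalFunctionalOn (M : Set (H →L[ℂ] H)) fun A => ω (φ t A)
  completelyPositive : ∀ t : ℝ, 0 ≤ t → ∀ n : ℕ, ∀ A : Fin n → (H →L[ℂ] H),
    (∀ i, A i ∈ M) → ∀ ξ : Fin n → H,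
    0 ≤ ∑ i, ∑ j, ⟪ξ i, φ t (star (A i) * A j) (ξ j)⟫_ℂ
  map_id : ∀ A ∈ M, φ 0 A = A
  semigroup : ∀ s t : ℝ, 0 ≤ s → 0 ≤ t → ∀ A ∈ M, φ (s + t) A = φ s (φ t A)
  pointWeakContinuous : ∀ A ∈ M, ∀ ξ η : H, ∀ t₀ : ℝ, 0 ≤ t₀ →
    Filter.Tendsto (fun t => ⟪η, φ t A ξ⟫_ℂ) (nhdsWithin t₀ (Set.Ici 0))
      (nhds ⟪η, φ t₀ A ξ⟫_ℂ)

/-- Membership in the domain `D(δ)` of the generator of a CP-semigroup. -/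
def CPSemigroup.InDomain {H : Type*} [NormedAddCommGroup H] [InnerProductSpace ℂ H]
    [CompleteSpace H] {M : VonNeumannAlgebra H} (S : CPSemigroup M)
    (A : H →L[ℂ] H) : Prop :=
  A ∈ M ∧ ∃ D ∈ M, ∀ ω : (H →L[ℂ] H) → ℂ,
    NormalFunctionalOn (M : Set (H →L[ℂ] H)) ω →
    Filter.Tendsto (fun t : ℝ => (t : ℂ)⁻¹ * (ω (S.φ t A) - ω A))
      (nhdsWithin 0 (Set.Ioi 0)) (nhds (ω D))

namespace CPSemigroup

variable {H : Type*} [NormedAddCommGroup H] [InnerProductSpace ℂ H] [CompleteSpace H]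
  {M : VonNeumannAlgebra H} (S : CPSemigroup M)

lemma cp_quad {t : ℝ} (ht : 0 ≤ t) {B : H →L[ℂ] H} (hB : B ∈ M) (w v : H) (l : ℂ) :
    0 ≤ (starRingEnd ℂ l) * l * ⟪w, S.φ t 1 w⟫_ℂ + (starRingEnd ℂ l) * ⟪w, S.φ t B v⟫_ℂ
      + l * ⟪v, S.φ t (star B) w⟫_ℂ + ⟪v, S.φ t (star B * B) v⟫_ℂ := by
  have h := S.completelyPositive t ht 2 ![1, B]
    (by intro i; fin_cases i
        · exact one_mem M
        · exact hB) ![l • w, v]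
  simp only [Fin.sum_univ_two, Matrix.cons_val_zero, Matrix.cons_val_one, Matrix.head_cons,
    star_one, one_mul, mul_one, ContinuousLinearMap.map_smul, inner_smul_left,
    inner_smul_right] at h
  convert h using 1
  ring

lemma inner_phi_star {t : ℝ} (ht : 0 ≤ t) {B : H →L[ℂ] H} (hB : B ∈ M) (w v : H) :
    ⟪v, S.φ t (star B) w⟫_ℂ = starRingEnd ℂ ⟪w, S.φ t B v⟫_ℂ := by
  have him : ∀ l : ℂ, ((starRingEnd ℂ l) * l * ⟪w, S.φ t 1 w⟫_ℂ
      + (starRingEnd ℂ l) * ⟪w, S.φ t B v⟫_ℂ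
      + l * ⟪v, S.φ t (star B) w⟫_ℂ + ⟪v, S.φ t (star B * B) v⟫_ℂ).im = 0 := by
    intro l
    have h := S.cp_quad ht hB w v l
    have := (Complex.le_def.mp h).2
    simpa using this.symm
  set a := ⟪w, S.φ t B v⟫_ℂ
  set b := ⟪v, S.φ t (star B) w⟫_ℂ
  set c := ⟪w, S.φ t 1 w⟫_ℂ
  set d := ⟪v, S.φ t (star B * B) v⟫_ℂ
  have h1 := him 1
  have h2 := him (-1)
  have h3 := him Complex.I
  have h4 := him (-Complex.I)
  simp only [map_one, one_mul, mul_one, map_neg, Complex.conj_I, neg_mul, mul_neg, neg_neg,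
    Complex.add_im, Complex.neg_im, Complex.mul_im, Complex.I_re, Complex.I_im,
    Complex.conj_re, Complex.conj_im, one_mul, zero_mul, mul_zero, mul_one] at h1 h2 h3 h4
  apply Complex.ext
  · simp only [Complex.conj_re]; linarith
  · simp only [Complex.conj_im]; linarith

lemma norm_phi_sq_le {t : ℝ} (ht : 0 ≤ t) {B : H →L[ℂ] H} (hB : B ∈ M) (v : H) :
    ‖S.φ t B v‖ ^ 2 ≤ (⟪v, S.φ t (star B * B) v⟫_ℂ).re := by
  set w := S.φ t B v with hw
  have h := S.cp_quad ht hB w v (-1)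
  have hre := (Complex.le_def.mp h).1
  have hb : ⟪v, S.φ t (star B) w⟫_ℂ = starRingEnd ℂ ⟪w, S.φ t B v⟫_ℂ :=
    S.inner_phi_star ht hB w v
  have ha : ⟪w, S.φ t B v⟫_ℂ = ((‖w‖ : ℂ)) ^ 2 := by
    rw [← hw]; exact inner_self_eq_norm_sq_to_K w
  have hc : (⟪w, S.φ t 1 w⟫_ℂ).re ≤ ‖w‖ ^ 2 := by
    have h1 : ‖S.φ t 1‖ ≤ 1 := by
      refine le_trans (S.contractive t ht 1 (one_mem M)) ?_
      rw [ContinuousLinearMap.one_def]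
      exact ContinuousLinearMap.norm_id_le
    calc (⟪w, S.φ t 1 w⟫_ℂ).re ≤ ‖⟪w, S.φ t 1 w⟫_ℂ‖ := Complex.re_le_norm _
      _ ≤ ‖w‖ * ‖S.φ t 1 w‖ := norm_inner_le_norm _ _
      _ ≤ ‖w‖ * (‖S.φ t 1‖ * ‖w‖) := by
          gcongr
          exact (S.φ t 1).le_opNorm w
      _ ≤ ‖w‖ * (1 * ‖w‖) := by gcongr
      _ = ‖w‖ ^ 2 := by ring
  rw [hb, ha] at hre
  simp only [map_neg, map_one, neg_mul, one_mul, neg_neg, mul_neg, Complex.add_re,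
    Complex.neg_re, Complex.zero_re, map_pow, Complex.conj_ofReal] at hre
  have hres : (((‖w‖ : ℂ)) ^ 2).re = ‖w‖ ^ 2 := by norm_cast
  rw [hres] at hre
  linarith

lemma contOn_inner {B : H →L[ℂ] H} (hB : B ∈ M) (w v : H) :
    ContinuousOn (fun c : ℝ => ⟪w, S.φ c B v⟫_ℂ) (Set.Ici 0) := by
  intro c hc
  exact (S.pointWeakContinuous B hB v w c hc).mono_left
    (nhdsWithin_mono _ (subset_refl _))

lemma tendsto_phi_at_zero {B : H →L[ℂ] H} (hB : B ∈ M) (v : H) :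
    Tendsto (fun c : ℝ => S.φ c B v) (nhdsWithin 0 (Set.Ici 0)) (nhds (B v)) := by
  have hBB : star B * B ∈ M := mul_mem (star_mem hB) hB
  set q : ℝ → ℝ := fun c => (⟪v, S.φ c (star B * B) v⟫_ℂ).re
    - 2 * (⟪B v, S.φ c B v⟫_ℂ).re + ‖B v‖ ^ 2 with hq
  have hq0 : Tendsto q (nhdsWithin 0 (Set.Ici 0)) (nhds 0) := by
    have h1 : Tendsto (fun c : ℝ => (⟪v, S.φ c (star B * B) v⟫_ℂ).re)
        (nhdsWithin 0 (Set.Ici 0)) (nhds ((⟪v, S.φ 0 (star B * B) v⟫_ℂ).re)) :=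
      (Complex.continuous_re.tendsto _).comp
        (S.pointWeakContinuous (star B * B) hBB v v 0 le_rfl)
    have h2 : Tendsto (fun c : ℝ => (⟪B v, S.φ c B v⟫_ℂ).re)
        (nhdsWithin 0 (Set.Ici 0)) (nhds ((⟪B v, S.φ 0 B v⟫_ℂ).re)) :=
      (Complex.continuous_re.tendsto _).comp
        (S.pointWeakContinuous B hB v (B v) 0 le_rfl)
    rw [S.map_id _ hBB] at h1
    rw [S.map_id _ hB] at h2
    have hval : (⟪v, (star B * B) v⟫_ℂ).re - 2 * (⟪B v, B v⟫_ℂ).re + ‖B v‖ ^ 2 = 0 := by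
      have e1 : ⟪v, (star B * B) v⟫_ℂ = ⟪B v, B v⟫_ℂ := by
        rw [ContinuousLinearMap.mul_apply, ContinuousLinearMap.star_eq_adjoint]
        exact ContinuousLinearMap.adjoint_inner_right _ _ _
      have e2 : ⟪B v, B v⟫_ℂ = ((‖B v‖ : ℂ)) ^ 2 := inner_self_eq_norm_sq_to_K _
      rw [e1, e2]
      have : (((‖B v‖ : ℂ)) ^ 2).re = ‖B v‖ ^ 2 := by norm_cast
      rw [this]; ring
    have h3 : Tendsto q (nhdsWithin 0 (Set.Ici 0))
        (nhds ((⟪v, (star B * B) v⟫_ℂ).re - 2 * (⟪B v, B v⟫_ℂ).re + ‖B v‖ ^ 2)) :=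
      (h1.sub (h2.const_mul 2)).add_const _
    rw [hval] at h3
    exact h3
  have hsq : Tendsto (fun c : ℝ => ‖S.φ c B v - B v‖ ^ 2) (nhdsWithin 0 (Set.Ici 0)) (nhds 0) := by
    apply squeeze_zero' (Eventually.of_forall fun c => sq_nonneg _) _ hq0
    filter_upwards [self_mem_nhdsWithin] with c (hc : (0:ℝ) ≤ c)
    have hns : ‖S.φ c B v - B v‖ ^ 2
        = ‖S.φ c B v‖ ^ 2 - 2 * (⟪S.φ c B v, B v⟫_ℂ).re + ‖B v‖ ^ 2 := by
      simpa using norm_sub_sq (𝕜 := ℂ) (S.φ c B v) (B v)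
    rw [hns]
    have hS := S.norm_phi_sq_le hc hB v
    have hsym : (⟪S.φ c B v, B v⟫_ℂ).re = (⟪B v, S.φ c B v⟫_ℂ).re := by
      rw [← inner_conj_symm (S.φ c B v) (B v)]
      exact Complex.conj_re _
    rw [hsym]
    simp only [hq]
    linarith
  have : Tendsto (fun c : ℝ => ‖S.φ c B v - B v‖) (nhdsWithin 0 (Set.Ici 0)) (nhds 0) := by
    have h := hsq.sqrt
    rw [Real.sqrt_zero] at h
    convert h using 2 with c
    rw [Real.sqrt_sq (norm_nonneg _)]
  rw [tendsto_iff_norm_sub_tendsto_zero]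
  exact this

lemma uIcc_subset_Ici {a b : ℝ} (ha : 0 ≤ a) (hb : 0 ≤ b) :
    Set.uIcc a b ⊆ Set.Ici 0 := by
  rw [Set.uIcc]
  intro x hx
  exact le_trans (le_inf ha hb) hx.1

lemma intervalIntegrable_inner {B : H →L[ℂ] H} (hB : B ∈ M) (w v : H) {a b : ℝ}
    (ha : 0 ≤ a) (hb : 0 ≤ b) :
    IntervalIntegrable (fun c => ⟪w, S.φ c B v⟫_ℂ) MeasureTheory.volume a b :=
  ((S.contOn_inner hB w v).mono (uIcc_subset_Ici ha hb)).intervalIntegrable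

lemma intervalIntegrable_inner' {B : H →L[ℂ] H} (hB : B ∈ M) (w v : H) {a b : ℝ}
    (ha : 0 ≤ a) (hb : 0 ≤ b) :
    IntervalIntegrable (fun c => ⟪S.φ c B v, w⟫_ℂ) MeasureTheory.volume a b := by
  have heq : (fun c : ℝ => ⟪S.φ c B v, w⟫_ℂ)
      = fun c => starRingEnd ℂ ⟪w, S.φ c B v⟫_ℂ := by
    funext c
    exact (inner_conj_symm _ _).symm
  rw [heq]
  have hco : ContinuousOn (fun c : ℝ => starRingEnd ℂ ⟪w, S.φ c B v⟫_ℂ) (Set.Ici 0) :=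
    Complex.continuous_conj.comp_continuousOn (S.contOn_inner hB w v)
  exact (hco.mono (uIcc_subset_Ici ha hb)).intervalIntegrable

lemma conj_intervalIntegral (f : ℝ → ℂ) (a b : ℝ) :
    starRingEnd ℂ (∫ c in a..b, f c) = ∫ c in a..b, starRingEnd ℂ (f c) := by
  rw [intervalIntegral, intervalIntegral, map_sub, ← integral_conj, ← integral_conj]
-- continuation fragment; will append to a.lean when compiling

lemma exists_Y {δ : ℝ} (hδ : 0 < δ) {A : H →L[ℂ] H} (hA : A ∈ M) :
    ∃ Y : H →L[ℂ] H, Y ∈ M ∧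
      ∀ w v : H, ⟪w, Y v⟫_ℂ = (δ : ℂ)⁻¹ * ∫ c in (0:ℝ)..δ, ⟪w, S.φ c A v⟫_ℂ := by
  have hnormb : ∀ (v w : H) (c : ℝ), c ∈ Set.uIoc (0:ℝ) δ →
      ‖⟪S.φ c A v, w⟫_ℂ‖ ≤ ‖A‖ * ‖v‖ * ‖w‖ := by
    intro v w c hc
    rw [Set.uIoc_of_le hδ.le] at hc
    calc ‖⟪S.φ c A v, w⟫_ℂ‖ ≤ ‖S.φ c A v‖ * ‖w‖ := norm_inner_le_norm _ _
      _ ≤ ‖S.φ c A‖ * ‖v‖ * ‖w‖ := by gcongr; exact (S.φ c A).le_opNorm v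
      _ ≤ ‖A‖ * ‖v‖ * ‖w‖ := by gcongr; exact S.contractive c hc.1.le A hA
  have hgb : ∀ v w : H, ‖(δ:ℂ)⁻¹ * ∫ c in (0:ℝ)..δ, ⟪S.φ c A v, w⟫_ℂ‖
      ≤ ‖A‖ * ‖v‖ * ‖w‖ := by
    intro v w
    rw [norm_mul]
    have h1 : ‖∫ c in (0:ℝ)..δ, ⟪S.φ c A v, w⟫_ℂ‖ ≤ (‖A‖ * ‖v‖ * ‖w‖) * |δ - 0| :=
      intervalIntegral.norm_integral_le_of_norm_le_const (hnormb v w)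
    have h2 : ‖((δ:ℝ) : ℂ)⁻¹‖ = δ⁻¹ := by
      rw [norm_inv, Complex.norm_real, Real.norm_eq_abs, abs_of_pos hδ]
    rw [h2]
    rw [sub_zero, abs_of_pos hδ] at h1
    calc δ⁻¹ * ‖∫ c in (0:ℝ)..δ, ⟪S.φ c A v, w⟫_ℂ‖ ≤ δ⁻¹ * (‖A‖ * ‖v‖ * ‖w‖ * δ) := by
          gcongr
      _ = ‖A‖ * ‖v‖ * ‖w‖ := by field_simp
  -- the linear functional in `w`, for fixed `v`
  let g : H → H →L[ℂ] ℂ := fun v => LinearMap.mkContinuous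
    { toFun := fun w => (δ:ℂ)⁻¹ * ∫ c in (0:ℝ)..δ, ⟪S.φ c A v, w⟫_ℂ
      map_add' := by
        intro w w'
        simp only [inner_add_right]
        rw [intervalIntegral.integral_add (S.intervalIntegrable_inner' hA w v le_rfl hδ.le)
          (S.intervalIntegrable_inner' hA w' v le_rfl hδ.le)]
        ring
      map_smul' := by
        intro m w
        simp only [inner_smul_right, RingHom.id_apply]
        rw [intervalIntegral.integral_const_mul]
        simp only [smul_eq_mul]
        ring }
    (‖A‖ * ‖v‖) (fun w => hgb v w)
  have hgapp : ∀ v w : H, g v w = (δ:ℂ)⁻¹ * ∫ c in (0:ℝ)..δ, ⟪S.φ c A v, w⟫_ℂ :=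
    fun v w => rfl
  let f : H → H := fun v => (InnerProductSpace.toDual ℂ H).symm (g v)
  have hfapp : ∀ v x : H, ⟪f v, x⟫_ℂ = g v x := by
    intro v x
    exact InnerProductSpace.toDual_symm_apply
  have hfdef : ∀ w v : H, ⟪w, f v⟫_ℂ = (δ:ℂ)⁻¹ * ∫ c in (0:ℝ)..δ, ⟪w, S.φ c A v⟫_ℂ := by
    intro w v
    rw [← inner_conj_symm w (f v), hfapp v w, hgapp]
    rw [map_mul, conj_intervalIntegral]
    congr 1
    · rw [← Complex.ofReal_inv, Complex.conj_ofReal]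
    · exact intervalIntegral.integral_congr (fun c _ => inner_conj_symm _ _)
  have hfadd : ∀ v v' : H, f (v + v') = f v + f v' := by
    intro v v'
    apply ext_inner_right ℂ
    intro x
    rw [inner_add_left, hfapp, hfapp, hfapp, hgapp, hgapp, hgapp]
    simp only [map_add, ContinuousLinearMap.add_apply, inner_add_left]
    rw [intervalIntegral.integral_add (S.intervalIntegrable_inner' hA x v le_rfl hδ.le)
      (S.intervalIntegrable_inner' hA x v' le_rfl hδ.le)]
    ring
  have hfsmul : ∀ (m : ℂ) (v : H), f (m • v) = m • f v := by
    intro m v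
    apply ext_inner_right ℂ
    intro x
    rw [inner_smul_left, hfapp, hfapp, hgapp, hgapp]
    simp only [ContinuousLinearMap.map_smul, inner_smul_left]
    rw [intervalIntegral.integral_const_mul]
    ring
  let Y0 : H →ₗ[ℂ] H := { toFun := f, map_add' := hfadd, map_smul' := hfsmul }
  have hY0b : ∀ v, ‖Y0 v‖ ≤ ‖A‖ * ‖v‖ := by
    intro v
    show ‖f v‖ ≤ ‖A‖ * ‖v‖
    have : ‖f v‖ = ‖g v‖ := LinearIsometryEquiv.norm_map _ _
    rw [this]
    exact ContinuousLinearMap.opNorm_le_bound _ (by positivity) (fun w => hgb v w)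
  let Y : H →L[ℂ] H := Y0.mkContinuous ‖A‖ (fun v => by
    calc ‖Y0 v‖ ≤ ‖A‖ * ‖v‖ := hY0b v)
  have hYapp : ∀ v, Y v = f v := fun v => rfl
  have hYdef : ∀ w v : H, ⟪w, Y v⟫_ℂ = (δ:ℂ)⁻¹ * ∫ c in (0:ℝ)..δ, ⟪w, S.φ c A v⟫_ℂ := by
    intro w v; rw [hYapp]; exact hfdef w v
  refine ⟨Y, ?_, hYdef⟩
  -- membership in the von Neumann algebra via the double commutant property
  have : Y ∈ Set.centralizer (Set.centralizer (M : Set (H →L[ℂ] H))) := by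
    rw [Set.mem_centralizer_iff]
    intro T hT
    rw [Set.mem_centralizer_iff] at hT
    apply ContinuousLinearMap.ext
    intro v
    apply ext_inner_left ℂ
    intro w
    have hTadj : ∀ u : H, ⟪w, T u⟫_ℂ = ⟪ContinuousLinearMap.adjoint T w, u⟫_ℂ := by
      intro u
      exact (ContinuousLinearMap.adjoint_inner_left T u w).symm
    calc ⟪w, (T * Y) v⟫_ℂ = ⟪w, T (Y v)⟫_ℂ := rfl
      _ = ⟪ContinuousLinearMap.adjoint T w, Y v⟫_ℂ := hTadj _
      _ = (δ:ℂ)⁻¹ * ∫ c in (0:ℝ)..δ, ⟪ContinuousLinearMap.adjoint T w, S.φ c A v⟫_ℂ :=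
          hYdef _ _
      _ = (δ:ℂ)⁻¹ * ∫ c in (0:ℝ)..δ, ⟪w, S.φ c A (T v)⟫_ℂ := by
          congr 1
          apply intervalIntegral.integral_congr
          intro c hc
          rw [Set.uIcc_of_le hδ.le] at hc
          show ⟪ContinuousLinearMap.adjoint T w, S.φ c A v⟫_ℂ = ⟪w, S.φ c A (T v)⟫_ℂ
          rw [ContinuousLinearMap.adjoint_inner_left T (S.φ c A v) w]
          have hcomm : S.φ c A * T = T * S.φ c A := hT (S.φ c A) (S.mapsTo c hc.1 A hA)
          have heq : T (S.φ c A v) = S.φ c A (T v) := by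
            have h5 := congrArg (fun (Z : H →L[ℂ] H) => Z v) hcomm
            simpa using h5.symm
          rw [heq]
      _ = ⟪w, Y (T v)⟫_ℂ := (hYdef _ _).symm
      _ = ⟪w, (Y * T) v⟫_ℂ := rfl
  rw [M.centralizer_centralizer] at this
  exact this

lemma normal_single (w v : H) :
    NormalFunctionalOn (M : Set (H →L[ℂ] H)) (fun X => ⟪w, X v⟫_ℂ) := by
  refine ⟨fun n => if n = 0 then w else 0, fun n => if n = 0 then v else 0, ?_, ?_, ?_⟩
  · apply summable_of_ne_finset_zero (s := {0})
    intro n hn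
    rw [Finset.mem_singleton] at hn
    simp [hn]
  · apply summable_of_ne_finset_zero (s := {0})
    intro n hn
    rw [Finset.mem_singleton] at hn
    simp [hn]
  · intro X hX
    rw [tsum_eq_single 0]
    · simp
    · intro n hn
      simp [hn]

omit [InnerProductSpace ℂ H] [CompleteSpace H] in
lemma summable_norm_mul {ζ η : ℕ → H} (hζ : Summable fun n => ‖ζ n‖ ^ 2)
    (hη : Summable fun n => ‖η n‖ ^ 2) :
    Summable fun n => ‖ζ n‖ * ‖η n‖ := by
  apply Summable.of_nonneg_of_le (fun n => by positivity)
    (fun n => ?_) (((hζ.add hη).mul_left (1/2 : ℝ)))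
  have h := sq_nonneg (‖ζ n‖ - ‖η n‖)
  nlinarith [norm_nonneg (ζ n), norm_nonneg (η n)]

lemma inner_phi_Y {t δ : ℝ} (ht : 0 ≤ t) (hδ : 0 < δ) {A Y : H →L[ℂ] H} (hA : A ∈ M)
    (hY : Y ∈ M)
    (hYdef : ∀ w v : H, ⟪w, Y v⟫_ℂ = (δ : ℂ)⁻¹ * ∫ c in (0:ℝ)..δ, ⟪w, S.φ c A v⟫_ℂ)
    (w v : H) :
    ⟪w, S.φ t Y v⟫_ℂ = (δ : ℂ)⁻¹ * ∫ c in (0:ℝ)..δ, ⟪w, S.φ (t + c) A v⟫_ℂ := by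
  obtain ⟨ζ, η, hζ, hη, hrep⟩ := S.normal t ht _ (normal_single (M := M) w v)
  have hmul : Summable fun k => ‖ζ k‖ * ‖η k‖ := summable_norm_mul hζ hη
  have hFint : ∀ k : ℕ, IntegrableOn (fun c => ⟪ζ k, S.φ c A (η k)⟫_ℂ)
      (Set.Ioc (0:ℝ) δ) MeasureTheory.volume := by
    intro k
    exact (intervalIntegrable_iff_integrableOn_Ioc_of_le hδ.le).mp
      (S.intervalIntegrable_inner hA (ζ k) (η k) le_rfl hδ.le)
  have hswap : ∑' k, ∫ c in Set.Ioc (0:ℝ) δ, ⟪ζ k, S.φ c A (η k)⟫_ℂ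
      = ∫ c in Set.Ioc (0:ℝ) δ, (∑' k, ⟪ζ k, S.φ c A (η k)⟫_ℂ) := by
    apply MeasureTheory.integral_tsum_of_summable_integral_norm hFint
    apply Summable.of_nonneg_of_le
      (fun k => MeasureTheory.integral_nonneg (fun c => norm_nonneg _))
      (fun k => ?_) (hmul.mul_left (δ * ‖A‖))
    have hb : ∀ c ∈ Set.Ioc (0:ℝ) δ, ‖⟪ζ k, S.φ c A (η k)⟫_ℂ‖ ≤ ‖A‖ * (‖ζ k‖ * ‖η k‖) := by
      intro c hc
      calc ‖⟪ζ k, S.φ c A (η k)⟫_ℂ‖ ≤ ‖ζ k‖ * ‖S.φ c A (η k)‖ := norm_inner_le_norm _ _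
        _ ≤ ‖ζ k‖ * (‖A‖ * ‖η k‖) := by
            gcongr
            calc ‖S.φ c A (η k)‖ ≤ ‖S.φ c A‖ * ‖η k‖ := (S.φ c A).le_opNorm _
              _ ≤ ‖A‖ * ‖η k‖ := by gcongr; exact S.contractive c hc.1.le A hA
        _ = ‖A‖ * (‖ζ k‖ * ‖η k‖) := by ring
    calc ∫ c in Set.Ioc (0:ℝ) δ, ‖⟪ζ k, S.φ c A (η k)⟫_ℂ‖
        ≤ ∫ _ in Set.Ioc (0:ℝ) δ, ‖A‖ * (‖ζ k‖ * ‖η k‖) := by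
          apply MeasureTheory.setIntegral_mono_on (hFint k).norm
            (MeasureTheory.integrableOn_const (by simp [Real.volume_Ioc]))
            measurableSet_Ioc hb
      _ = δ * ‖A‖ * (‖ζ k‖ * ‖η k‖) := by
          rw [MeasureTheory.setIntegral_const]
          simp [Real.volume_Ioc, ENNReal.toReal_ofReal hδ.le]
          rw [max_eq_left hδ.le]; ring
  have hstep : ∑' k, ⟪ζ k, Y (η k)⟫_ℂ
      = (δ:ℂ)⁻¹ * ∫ c in (0:ℝ)..δ, (∑' k, ⟪ζ k, S.φ c A (η k)⟫_ℂ) := by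
    calc ∑' k, ⟪ζ k, Y (η k)⟫_ℂ
        = ∑' k, ((δ:ℂ)⁻¹ * ∫ c in (0:ℝ)..δ, ⟪ζ k, S.φ c A (η k)⟫_ℂ) :=
          tsum_congr fun k => hYdef (ζ k) (η k)
      _ = (δ:ℂ)⁻¹ * ∑' k, ∫ c in (0:ℝ)..δ, ⟪ζ k, S.φ c A (η k)⟫_ℂ := tsum_mul_left
      _ = (δ:ℂ)⁻¹ * ∫ c in (0:ℝ)..δ, (∑' k, ⟪ζ k, S.φ c A (η k)⟫_ℂ) := by
          congr 1
          rw [intervalIntegral.integral_of_le hδ.le]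
          rw [← hswap]
          exact tsum_congr fun k => (intervalIntegral.integral_of_le hδ.le)
  calc ⟪w, S.φ t Y v⟫_ℂ = ∑' k, ⟪ζ k, Y (η k)⟫_ℂ := hrep Y hY
    _ = (δ:ℂ)⁻¹ * ∫ c in (0:ℝ)..δ, (∑' k, ⟪ζ k, S.φ c A (η k)⟫_ℂ) := hstep
    _ = (δ:ℂ)⁻¹ * ∫ c in (0:ℝ)..δ, ⟪w, S.φ (t + c) A v⟫_ℂ := by
        congr 1
        apply intervalIntegral.integral_congr
        intro c hc
        rw [Set.uIcc_of_le hδ.le] at hc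
        have h1 : (∑' k, ⟪ζ k, S.φ c A (η k)⟫_ℂ) = ⟪w, S.φ t (S.φ c A) v⟫_ℂ :=
          (hrep (S.φ c A) (S.mapsTo c hc.1 A hA)).symm
        have h2 : S.φ (t + c) A = S.φ t (S.φ c A) := S.semigroup t c ht hc.1 A hA
        show (∑' k, ⟪ζ k, S.φ c A (η k)⟫_ℂ) = ⟪w, S.φ (t + c) A v⟫_ℂ
        rw [h1, h2]

lemma Z_norm_le {δ : ℝ} (hδ : 0 < δ) {A Y : H →L[ℂ] H} (hA : A ∈ M)
    (hYdef : ∀ w v : H, ⟪w, Y v⟫_ℂ = (δ : ℂ)⁻¹ * ∫ c in (0:ℝ)..δ, ⟪w, S.φ c A v⟫_ℂ)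
    (v : H) {ε : ℝ} (hε : ∀ c ∈ Set.Icc (0:ℝ) δ, ‖A v - S.φ c A v‖ ≤ ε) :
    ‖(A - Y) v‖ ≤ ε := by
  have hε0 : 0 ≤ ε := le_trans (norm_nonneg _) (hε 0 ⟨le_rfl, hδ.le⟩)
  set z := (A - Y) v with hz
  have hδℂ : ((δ:ℝ):ℂ) ≠ 0 := Complex.ofReal_ne_zero.mpr hδ.ne'
  have hzin : ⟪z, z⟫_ℂ = (δ:ℂ)⁻¹ * ∫ c in (0:ℝ)..δ, ⟪z, A v - S.φ c A v⟫_ℂ := by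
    have hconst : ⟪z, A v⟫_ℂ = (δ:ℂ)⁻¹ * ∫ c in (0:ℝ)..δ, (⟪z, A v⟫_ℂ) := by
      rw [intervalIntegral.integral_const, sub_zero, Complex.real_smul, ← mul_assoc,
        inv_mul_cancel₀ hδℂ, one_mul]
    calc ⟪z, z⟫_ℂ = ⟪z, A v⟫_ℂ - ⟪z, Y v⟫_ℂ := by
          nth_rewrite 2 [hz]
          rw [ContinuousLinearMap.sub_apply, inner_sub_right]
      _ = (δ:ℂ)⁻¹ * ((∫ c in (0:ℝ)..δ, (⟪z, A v⟫_ℂ)) - ∫ c in (0:ℝ)..δ, ⟪z, S.φ c A v⟫_ℂ) := by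
          rw [hYdef z v]
          nth_rewrite 1 [hconst]
          ring
      _ = (δ:ℂ)⁻¹ * ∫ c in (0:ℝ)..δ, (⟪z, A v⟫_ℂ - ⟪z, S.φ c A v⟫_ℂ) := by
          rw [intervalIntegral.integral_sub intervalIntegrable_const
            (S.intervalIntegrable_inner hA z v le_rfl hδ.le)]
      _ = (δ:ℂ)⁻¹ * ∫ c in (0:ℝ)..δ, ⟪z, A v - S.φ c A v⟫_ℂ := by
          congr 1
          exact intervalIntegral.integral_congr fun c _ => (inner_sub_right _ _ _).symm
  have hn2 : ‖z‖ ^ 2 = ‖⟪z, z⟫_ℂ‖ := by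
    rw [inner_self_eq_norm_sq_to_K, norm_pow, RCLike.norm_ofReal, abs_norm]
  have hb : ‖⟪z, z⟫_ℂ‖ ≤ δ⁻¹ * ((‖z‖ * ε) * |δ - 0|) := by
    rw [hzin, norm_mul]
    have h2 : ‖((δ:ℝ) : ℂ)⁻¹‖ = δ⁻¹ := by
      rw [norm_inv, Complex.norm_real, Real.norm_eq_abs, abs_of_pos hδ]
    rw [h2]
    gcongr
    apply intervalIntegral.norm_integral_le_of_norm_le_const
    intro c hc
    rw [Set.uIoc_of_le hδ.le] at hc
    calc ‖⟪z, A v - S.φ c A v⟫_ℂ‖ ≤ ‖z‖ * ‖A v - S.φ c A v‖ := norm_inner_le_norm _ _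
      _ ≤ ‖z‖ * ε := by
          gcongr
          exact hε c ⟨hc.1.le, hc.2⟩
  rw [← hn2, sub_zero, abs_of_pos hδ] at hb
  have hb2 : ‖z‖ ^ 2 ≤ ‖z‖ * ε := by
    calc ‖z‖ ^ 2 ≤ δ⁻¹ * (‖z‖ * ε * δ) := hb
      _ = ‖z‖ * ε := by field_simp
  rcases le_or_gt ‖z‖ ε with h | h
  · exact h
  · nlinarith [norm_nonneg z]

lemma lipschitz_Y {δ : ℝ} (hδ : 0 < δ) {A Y : H →L[ℂ] H} (hA : A ∈ M) (hY : Y ∈ M)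
    (hYdef : ∀ w v : H, ⟪w, Y v⟫_ℂ = (δ : ℂ)⁻¹ * ∫ c in (0:ℝ)..δ, ⟪w, S.φ c A v⟫_ℂ)
    (ξ : H) {t u : ℝ} (ht : 0 ≤ t) (hu : 0 ≤ u) :
    ‖S.φ t Y ξ - S.φ u Y ξ‖ ≤ δ⁻¹ * (2 * (‖A‖ * ‖ξ‖)) * |t - u| := by
  set w := S.φ t Y ξ - S.φ u Y ξ with hw
  have hig : ∀ a b : ℝ, 0 ≤ a → 0 ≤ b →
      IntervalIntegrable (fun c => ⟪w, S.φ c A ξ⟫_ℂ) MeasureTheory.volume a b :=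
    fun a b ha hb => S.intervalIntegrable_inner hA w ξ ha hb
  have hshift : ∀ s : ℝ, 0 ≤ s →
      ⟪w, S.φ s Y ξ⟫_ℂ = (δ:ℂ)⁻¹ * ∫ c in s..(s+δ), ⟪w, S.φ c A ξ⟫_ℂ := by
    intro s hs
    rw [S.inner_phi_Y hs hδ hA hY hYdef w ξ]
    congr 1
    have h := intervalIntegral.integral_comp_add_left (a := (0:ℝ)) (b := δ)
      (fun c => ⟪w, S.φ c A ξ⟫_ℂ) s
    simpa using h
  have hdiff : ⟪w, w⟫_ℂ = (δ:ℂ)⁻¹ * ((∫ c in t..(t+δ), ⟪w, S.φ c A ξ⟫_ℂ)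
      - ∫ c in u..(u+δ), ⟪w, S.φ c A ξ⟫_ℂ) := by
    nth_rewrite 2 [hw]
    rw [inner_sub_right, hshift t ht, hshift u hu]
    ring
  have e1 : (∫ c in t..u, ⟪w, S.φ c A ξ⟫_ℂ) + ∫ c in u..(t+δ), ⟪w, S.φ c A ξ⟫_ℂ
      = ∫ c in t..(t+δ), ⟪w, S.φ c A ξ⟫_ℂ :=
    intervalIntegral.integral_add_adjacent_intervals (hig t u ht hu)
      (hig u (t+δ) hu (by positivity))
  have e2 : (∫ c in u..(t+δ), ⟪w, S.φ c A ξ⟫_ℂ) + ∫ c in (t+δ)..(u+δ), ⟪w, S.φ c A ξ⟫_ℂ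
      = ∫ c in u..(u+δ), ⟪w, S.φ c A ξ⟫_ℂ :=
    intervalIntegral.integral_add_adjacent_intervals (hig u (t+δ) hu (by positivity))
      (hig (t+δ) (u+δ) (by positivity) (by positivity))
  have hpt : ∀ (a b : ℝ), 0 ≤ a → 0 ≤ b →
      ‖∫ c in a..b, ⟪w, S.φ c A ξ⟫_ℂ‖ ≤ (‖w‖ * (‖A‖ * ‖ξ‖)) * |b - a| := by
    intro a b ha hb
    apply intervalIntegral.norm_integral_le_of_norm_le_const
    intro c hc
    have hc0 : 0 ≤ c := by
      rcases hc with hc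
      have := hc.1
      have hmin : (0:ℝ) ≤ min a b := le_min ha hb
      exact le_trans hmin this.le
    calc ‖⟪w, S.φ c A ξ⟫_ℂ‖ ≤ ‖w‖ * ‖S.φ c A ξ‖ := norm_inner_le_norm _ _
      _ ≤ ‖w‖ * (‖A‖ * ‖ξ‖) := by
          gcongr
          calc ‖S.φ c A ξ‖ ≤ ‖S.φ c A‖ * ‖ξ‖ := (S.φ c A).le_opNorm _
            _ ≤ ‖A‖ * ‖ξ‖ := by gcongr; exact S.contractive c hc0 A hA
  have hn2 : ‖w‖ ^ 2 = ‖⟪w, w⟫_ℂ‖ := by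
    rw [inner_self_eq_norm_sq_to_K, norm_pow, RCLike.norm_ofReal, abs_norm]
  have hbound : ‖w‖ ^ 2 ≤ δ⁻¹ * ((‖w‖ * (‖A‖ * ‖ξ‖)) * |t - u|
      + (‖w‖ * (‖A‖ * ‖ξ‖)) * |t - u|) := by
    rw [hn2, hdiff, norm_mul]
    have h2 : ‖((δ:ℝ) : ℂ)⁻¹‖ = δ⁻¹ := by
      rw [norm_inv, Complex.norm_real, Real.norm_eq_abs, abs_of_pos hδ]
    rw [h2]
    gcongr
    have hsplit : (∫ c in t..(t+δ), ⟪w, S.φ c A ξ⟫_ℂ) - ∫ c in u..(u+δ), ⟪w, S.φ c A ξ⟫_ℂ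
        = (∫ c in t..u, ⟪w, S.φ c A ξ⟫_ℂ) - ∫ c in (t+δ)..(u+δ), ⟪w, S.φ c A ξ⟫_ℂ := by
      linear_combination e2 - e1
    rw [hsplit]
    calc ‖(∫ c in t..u, ⟪w, S.φ c A ξ⟫_ℂ) - ∫ c in (t+δ)..(u+δ), ⟪w, S.φ c A ξ⟫_ℂ‖
        ≤ ‖∫ c in t..u, ⟪w, S.φ c A ξ⟫_ℂ‖ + ‖∫ c in (t+δ)..(u+δ), ⟪w, S.φ c A ξ⟫_ℂ‖ :=
          norm_sub_le _ _
      _ ≤ (‖w‖ * (‖A‖ * ‖ξ‖)) * |u - t| + (‖w‖ * (‖A‖ * ‖ξ‖)) * |u + δ - (t + δ)| :=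
          add_le_add (hpt t u ht hu) (hpt (t+δ) (u+δ) (by positivity) (by positivity))
      _ = (‖w‖ * (‖A‖ * ‖ξ‖)) * |t - u| + (‖w‖ * (‖A‖ * ‖ξ‖)) * |t - u| := by
          rw [abs_sub_comm u t]
          congr 2
          rw [show u + δ - (t + δ) = u - t by ring, abs_sub_comm u t]
  have hfin : ‖w‖ ^ 2 ≤ (δ⁻¹ * (2 * (‖A‖ * ‖ξ‖)) * |t - u|) * ‖w‖ := by
    calc ‖w‖ ^ 2 ≤ δ⁻¹ * ((‖w‖ * (‖A‖ * ‖ξ‖)) * |t - u|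
        + (‖w‖ * (‖A‖ * ‖ξ‖)) * |t - u|) := hbound
      _ = (δ⁻¹ * (2 * (‖A‖ * ‖ξ‖)) * |t - u|) * ‖w‖ := by ring
  rcases eq_or_lt_of_le (norm_nonneg w) with h0 | h0
  · rw [← h0]
    positivity
  · have := mul_le_mul_of_nonneg_right hfin (le_of_lt (inv_pos.mpr h0))
    calc ‖w‖ = ‖w‖ ^ 2 * ‖w‖⁻¹ := by field_simp [h0.ne']
      _ ≤ ((δ⁻¹ * (2 * (‖A‖ * ‖ξ‖)) * |t - u|) * ‖w‖) * ‖w‖⁻¹ := by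
          gcongr
      _ = δ⁻¹ * (2 * (‖A‖ * ‖ξ‖)) * |t - u| := by
          field_simp

end CPSemigroup

/-- **Main theorem.** A CP-semigroup is continuous in the point-strong operator topology:
for every `A ∈ M`, `ξ ∈ H` and `t₀ ≥ 0`, `‖φ_t(A)ξ − φ_{t₀}(A)ξ‖ → 0` as `t → t₀`
(two-sided limit, `t` ranging over `[0,∞)`). -/
theorem cpSemigroup_pointStrong_continuous {H : Type*} [NormedAddCommGroup H]
    [InnerProductSpace ℂ H] [CompleteSpace H] {M : VonNeumannAlgebra H}
    (S : CPSemigroup M) (A : H →L[ℂ] H) (hA : A ∈ M) (ξ : H) (t₀ : ℝ) (ht₀ : 0 ≤ t₀) :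
    Filter.Tendsto (fun t : ℝ => ‖S.φ t A ξ - S.φ t₀ A ξ‖)
      (nhdsWithin t₀ (Set.Ici 0)) (nhds 0) := by
  classical
  obtain ⟨ζ, η, hζ, hη, hrep⟩ := S.normal t₀ ht₀ _ (CPSemigroup.normal_single (M := M) ξ ξ)
  have hmul : Summable fun k => ‖ζ k‖ * ‖η k‖ := CPSemigroup.summable_norm_mul hζ hη
  rw [Metric.tendsto_nhds]
  intro ε hε
  set ε1 := ε / 5 with hε1def
  have hε1pos : 0 < ε1 := by positivity
  -- Step 1: choose the smoothing parameter δ and the smoothed operator Y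
  obtain ⟨δ, hδ, Y, hY, hYdef, hsmall⟩ :
      ∃ δ : ℝ, 0 < δ ∧ ∃ Y : H →L[ℂ] H, Y ∈ M ∧
        (∀ w v : H, ⟪w, Y v⟫_ℂ = (δ : ℂ)⁻¹ * ∫ c in (0:ℝ)..δ, ⟪w, S.φ c A v⟫_ℂ) ∧
        ∑' k, ‖(A - Y) (ζ k)‖ * ‖(A - Y) (η k)‖ < ε1 ^ 2 := by
    have hex : ∀ δ : ℝ, 0 < δ → ∃ Y : H →L[ℂ] H, Y ∈ M ∧
        ∀ w v : H, ⟪w, Y v⟫_ℂ = (δ : ℂ)⁻¹ * ∫ c in (0:ℝ)..δ, ⟪w, S.φ c A v⟫_ℂ :=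
      fun δ hδ => S.exists_Y hδ hA
    choose Yf hYfmem hYfdef using hex
    have hZglob : ∀ (δ : ℝ) (h : 0 < δ) (v : H), ‖(A - Yf δ h) v‖ ≤ 2 * ‖A‖ * ‖v‖ := by
      intro δ h v
      apply S.Z_norm_le h hA (hYfdef δ h) v
      intro c hc
      calc ‖A v - S.φ c A v‖ ≤ ‖A v‖ + ‖S.φ c A v‖ := norm_sub_le _ _
        _ ≤ ‖A‖ * ‖v‖ + ‖A‖ * ‖v‖ := by
            apply add_le_add (A.le_opNorm v)
            calc ‖S.φ c A v‖ ≤ ‖S.φ c A‖ * ‖v‖ := (S.φ c A).le_opNorm v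
              _ ≤ ‖A‖ * ‖v‖ := by gcongr; exact S.contractive c hc.1 A hA
        _ = 2 * ‖A‖ * ‖v‖ := by ring
    have hZv : ∀ (v : H) (ε' : ℝ), 0 < ε' → ∀ᶠ δ in nhdsWithin (0:ℝ) (Set.Ioi 0),
        ∀ h : 0 < δ, ‖(A - Yf δ h) v‖ ≤ ε' := by
      intro v ε' hε'
      obtain ⟨δ₀, hδ₀, hd⟩ :=
        Metric.tendsto_nhdsWithin_nhds.mp (S.tendsto_phi_at_zero hA v) ε' hε'
      filter_upwards [Ioo_mem_nhdsGT hδ₀] with δ hδmem h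
      apply S.Z_norm_le h hA (hYfdef δ h) v
      intro c hc
      have hc0 : (0:ℝ) ≤ c := hc.1
      have hcd : dist c 0 < δ₀ := by
        rw [Real.dist_eq, sub_zero, abs_of_nonneg hc0]
        exact lt_of_le_of_lt hc.2 hδmem.2
      have h3 := hd hc0 hcd
      rw [dist_eq_norm] at h3
      rw [norm_sub_rev]
      exact h3.le
    have hZvT : ∀ v : H, Tendsto (fun δ => if h : 0 < δ then ‖(A - Yf δ h) v‖ else 0)
        (nhdsWithin (0:ℝ) (Set.Ioi 0)) (nhds 0) := by
      intro v
      rw [Metric.tendsto_nhds]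
      intro ε' hε'
      filter_upwards [hZv v (ε'/2) (by positivity), self_mem_nhdsWithin] with δ h1 h2
      have h2' : (0:ℝ) < δ := h2
      rw [dif_pos h2', Real.dist_eq, sub_zero, abs_of_nonneg (norm_nonneg _)]
      exact lt_of_le_of_lt (h1 h2') (by linarith)
    have hT : Tendsto (fun δ => ∑' k, ((if h : 0 < δ then ‖(A - Yf δ h) (ζ k)‖ else 0)
        * (if h : 0 < δ then ‖(A - Yf δ h) (η k)‖ else 0)))
        (nhdsWithin (0:ℝ) (Set.Ioi 0)) (nhds 0) := by
      have hT' : Tendsto (fun δ => ∑' k, ((if h : 0 < δ then ‖(A - Yf δ h) (ζ k)‖ else 0)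
          * (if h : 0 < δ then ‖(A - Yf δ h) (η k)‖ else 0)))
          (nhdsWithin (0:ℝ) (Set.Ioi 0)) (nhds (∑' (_ : ℕ), (0:ℝ))) := ?_
      · simpa using hT'
      apply tendsto_tsum_of_dominated_convergence
        (bound := fun k => (2 * ‖A‖ * ‖ζ k‖) * (2 * ‖A‖ * ‖η k‖))
      · apply Summable.of_nonneg_of_le (fun k => by positivity) (fun k => ?_)
          (hmul.mul_left (4 * ‖A‖ ^ 2))
        have : (2 * ‖A‖ * ‖ζ k‖) * (2 * ‖A‖ * ‖η k‖)
            = 4 * ‖A‖ ^ 2 * (‖ζ k‖ * ‖η k‖) := by ring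
        rw [this]
      · intro k
        have := (hZvT (ζ k)).mul (hZvT (η k))
        rw [mul_zero] at this
        exact this
      · filter_upwards [self_mem_nhdsWithin] with δ h2
        have h2' : (0:ℝ) < δ := h2
        intro k
        rw [dif_pos h2', dif_pos h2', Real.norm_eq_abs,
          abs_of_nonneg (by positivity : (0:ℝ) ≤ ‖(A - Yf δ h2') (ζ k)‖ * ‖(A - Yf δ h2') (η k)‖)]
        exact mul_le_mul (hZglob δ h2' (ζ k)) (hZglob δ h2' (η k)) (norm_nonneg _)
          (by positivity)
    have hev := (hT.eventually_lt_const (by positivity : (0:ℝ) < ε1 ^ 2)).and self_mem_nhdsWithin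
    obtain ⟨δ, h1, h2⟩ := hev.exists
    have hδpos : (0:ℝ) < δ := h2
    refine ⟨δ, hδpos, Yf δ hδpos, hYfmem δ hδpos, hYfdef δ hδpos, ?_⟩
    have := h1
    simp only [dif_pos hδpos] at this
    exact this
  -- Step 2: the three-term estimate
  set Z : H →L[ℂ] H := A - Y with hZdef
  have hZmem : Z ∈ M := sub_mem hA hY
  have hZZ : star Z * Z ∈ M := mul_mem (star_mem hZmem) hZmem
  have hZglob : ∀ v : H, ‖Z v‖ ≤ 2 * ‖A‖ * ‖v‖ := by
    intro v
    apply S.Z_norm_le hδ hA hYdef v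
    intro c hc
    calc ‖A v - S.φ c A v‖ ≤ ‖A v‖ + ‖S.φ c A v‖ := norm_sub_le _ _
      _ ≤ ‖A‖ * ‖v‖ + ‖A‖ * ‖v‖ := by
          apply add_le_add (A.le_opNorm v)
          calc ‖S.φ c A v‖ ≤ ‖S.φ c A‖ * ‖v‖ := (S.φ c A).le_opNorm v
            _ ≤ ‖A‖ * ‖v‖ := by gcongr; exact S.contractive c hc.1 A hA
      _ = 2 * ‖A‖ * ‖v‖ := by ring
  have hsumZ : Summable fun k => ‖Z (ζ k)‖ * ‖Z (η k)‖ := by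
    apply Summable.of_nonneg_of_le (fun k => by positivity) (fun k => ?_)
      (hmul.mul_left (4 * ‖A‖ ^ 2))
    calc ‖Z (ζ k)‖ * ‖Z (η k)‖ ≤ (2 * ‖A‖ * ‖ζ k‖) * (2 * ‖A‖ * ‖η k‖) :=
          mul_le_mul (hZglob (ζ k)) (hZglob (η k)) (norm_nonneg _) (by positivity)
      _ = 4 * ‖A‖ ^ 2 * (‖ζ k‖ * ‖η k‖) := by ring
  have hqt₀ : (⟪ξ, S.φ t₀ (star Z * Z) ξ⟫_ℂ).re < ε1 ^ 2 := by
    have h1 : ⟪ξ, S.φ t₀ (star Z * Z) ξ⟫_ℂ = ∑' k, ⟪ζ k, (star Z * Z) (η k)⟫_ℂ :=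
      hrep _ hZZ
    have h2 : ∀ k : ℕ, ⟪ζ k, (star Z * Z) (η k)⟫_ℂ = ⟪Z (ζ k), Z (η k)⟫_ℂ := by
      intro k
      rw [ContinuousLinearMap.mul_apply, ContinuousLinearMap.star_eq_adjoint]
      exact ContinuousLinearMap.adjoint_inner_right _ _ _
    have hsum' : Summable fun k => ‖⟪Z (ζ k), Z (η k)⟫_ℂ‖ :=
      Summable.of_nonneg_of_le (fun k => norm_nonneg _)
        (fun k => norm_inner_le_norm _ _) hsumZ
    calc (⟪ξ, S.φ t₀ (star Z * Z) ξ⟫_ℂ).re ≤ ‖⟪ξ, S.φ t₀ (star Z * Z) ξ⟫_ℂ‖ :=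
          Complex.re_le_norm _
      _ = ‖∑' k, ⟪Z (ζ k), Z (η k)⟫_ℂ‖ := by rw [h1, tsum_congr h2]
      _ ≤ ∑' k, ‖⟪Z (ζ k), Z (η k)⟫_ℂ‖ := norm_tsum_le_tsum_norm hsum'
      _ ≤ ∑' k, ‖Z (ζ k)‖ * ‖Z (η k)‖ :=
          Summable.tsum_le_tsum (fun k => norm_inner_le_norm _ _) hsum' hsumZ
      _ < ε1 ^ 2 := hsmall
  have hq : Tendsto (fun t => (⟪ξ, S.φ t (star Z * Z) ξ⟫_ℂ).re) (nhdsWithin t₀ (Set.Ici 0))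
      (nhds ((⟪ξ, S.φ t₀ (star Z * Z) ξ⟫_ℂ).re)) :=
    (Complex.continuous_re.tendsto _).comp (S.pointWeakContinuous _ hZZ ξ ξ t₀ ht₀)
  have hterm3 : ‖S.φ t₀ Z ξ‖ ≤ ε1 := by
    have h1 := S.norm_phi_sq_le ht₀ hZmem ξ
    nlinarith [norm_nonneg (S.φ t₀ Z ξ)]
  set ρ := (ε1 * δ) / (2 * (‖A‖ * ‖ξ‖) + 1) with hρdef
  have hρpos : 0 < ρ := by positivity
  have hball : ∀ᶠ t in nhdsWithin t₀ (Set.Ici 0), |t - t₀| < ρ := by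
    have hmem : Metric.ball t₀ ρ ∈ nhdsWithin t₀ (Set.Ici 0) :=
      nhdsWithin_le_nhds (Metric.ball_mem_nhds _ hρpos)
    filter_upwards [hmem] with t ht
    rw [Metric.mem_ball, Real.dist_eq] at ht
    exact ht
  filter_upwards [self_mem_nhdsWithin, hq.eventually_lt_const hqt₀, hball]
    with t htIci hqlt htclose
  have htnn : (0:ℝ) ≤ t := htIci
  have hterm1 : ‖S.φ t Z ξ‖ ≤ ε1 := by
    have h1 := S.norm_phi_sq_le htnn hZmem ξ
    nlinarith [norm_nonneg (S.φ t Z ξ)]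
  have hterm2 : ‖S.φ t Y ξ - S.φ t₀ Y ξ‖ ≤ ε1 := by
    have h1 := S.lipschitz_Y hδ hA hY hYdef ξ htnn ht₀
    have h2 : δ⁻¹ * (2 * (‖A‖ * ‖ξ‖)) * |t - t₀| ≤ ε1 := by
      calc δ⁻¹ * (2 * (‖A‖ * ‖ξ‖)) * |t - t₀|
          ≤ δ⁻¹ * (2 * (‖A‖ * ‖ξ‖) + 1) * ρ := by
            apply mul_le_mul
            · apply mul_le_mul le_rfl (by linarith) (by positivity) (by positivity)
            · exact htclose.le
            · exact abs_nonneg _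
            · positivity
        _ = ε1 := by
            rw [hρdef]
            field_simp
    exact le_trans h1 h2
  have hdecomp : S.φ t A ξ - S.φ t₀ A ξ
      = (S.φ t Z ξ - S.φ t₀ Z ξ) + (S.φ t Y ξ - S.φ t₀ Y ξ) := by
    have h1 : ∀ s : ℝ, S.φ s A ξ = S.φ s Z ξ + S.φ s Y ξ := by
      intro s
      have h2 : S.φ s A = S.φ s Z + S.φ s Y := by
        rw [← map_add]
        congr 1
        rw [hZdef]
        abel
      rw [h2, ContinuousLinearMap.add_apply]
    rw [h1 t, h1 t₀]
    abel
  rw [Real.dist_eq, sub_zero, abs_of_nonneg (norm_nonneg _)]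
  calc ‖S.φ t A ξ - S.φ t₀ A ξ‖
      ≤ ‖S.φ t Z ξ - S.φ t₀ Z ξ‖ + ‖S.φ t Y ξ - S.φ t₀ Y ξ‖ := by
        rw [hdecomp]; exact norm_add_le _ _
    _ ≤ (‖S.φ t Z ξ‖ + ‖S.φ t₀ Z ξ‖) + ‖S.φ t Y ξ - S.φ t₀ Y ξ‖ := by
        gcongr
        exact norm_sub_le _ _
    _ ≤ (ε1 + ε1) + ε1 := by
        gcongr
    _ < ε := by
        rw [hε1def]
        linarith
end

section
/- Let φ be a CP-semigroup on a von Neumann algebra M ⊆ B(H). Then for every A ∈ M and ξ ∈ H, the map t ↦ φ_t(A)ξ from [0,∞) to H is continuous from the right in norm: for every t ≥ 0, lim_{h→0+} ‖φ_{t+h}(A)ξ − φ_t(A)ξ‖ = 0. -/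
open scoped InnerProductSpace ComplexOrder
open Filter Topology MeasureTheory

lemma aux_complex (a v w : ℂ) (n : ℝ)
    (key : ∀ c : ℂ, 0 ≤ (starRingEnd ℂ) c * c * a + (starRingEnd ℂ) c * (n : ℂ) + c * v + w)
    (ha : a.re ≤ n) : n ≤ w.re := by
  have h1 := key 1
  have h2 := key (-1)
  have h3 := key Complex.I
  rw [Complex.le_def] at h1 h2 h3
  simp only [Complex.zero_re, Complex.zero_im, map_one, map_neg, Complex.conj_I, one_mul,
    mul_one, neg_mul, mul_neg, neg_neg, Complex.I_mul_I, Complex.add_re, Complex.add_im,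
    Complex.neg_re, Complex.neg_im, Complex.mul_re, Complex.mul_im, Complex.I_re,
    Complex.I_im, Complex.ofReal_re, Complex.ofReal_im, Complex.one_re, Complex.one_im] at h1 h2 h3
  obtain ⟨h1r, h1i⟩ := h1
  obtain ⟨h2r, h2i⟩ := h2
  obtain ⟨h3r, h3i⟩ := h3
  nlinarith [h1r, h1i, h2r, h2i, h3r, h3i, ha]

lemma cp_schwarz {H : Type*} [NormedAddCommGroup H] [InnerProductSpace ℂ H]
    [CompleteSpace H] {M : VonNeumannAlgebra H} (S : CPSemigroup M)
    (s : ℝ) (hs : 0 ≤ s) (B : H →L[ℂ] H) (hB : B ∈ M) (ξ : H) :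
    ‖S.φ s B ξ‖ ^ 2 ≤ (⟪ξ, S.φ s (star B * B) ξ⟫_ℂ).re := by
  set η := S.φ s B ξ with hη
  have hmem : ∀ i, (![1, B] : Fin 2 → (H →L[ℂ] H)) i ∈ M := by
    intro i
    fin_cases i
    · exact one_mem M
    · exact hB
  have pos : ∀ c : ℂ, 0 ≤ (starRingEnd ℂ) c * c * ⟪η, S.φ s 1 η⟫_ℂ
      + (starRingEnd ℂ) c * ((‖η‖ ^ 2 : ℝ) : ℂ) + c * ⟪ξ, S.φ s (star B) η⟫_ℂ
      + ⟪ξ, S.φ s (star B * B) ξ⟫_ℂ := by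
    intro c
    have h2 := S.completelyPositive s hs 2 ![1, B] hmem ![c • η, ξ]
    have e : (∑ i, ∑ j, ⟪(![c • η, ξ]) i,
        S.φ s (star ((![1, B]) i) * (![1, B]) j) ((![c • η, ξ]) j)⟫_ℂ)
        = (starRingEnd ℂ) c * c * ⟪η, S.φ s 1 η⟫_ℂ
          + (starRingEnd ℂ) c * ((‖η‖ ^ 2 : ℝ) : ℂ) + c * ⟪ξ, S.φ s (star B) η⟫_ℂ
          + ⟪ξ, S.φ s (star B * B) ξ⟫_ℂ := by
      simp only [Fin.sum_univ_two, Matrix.cons_val_zero, Matrix.cons_val_one, Matrix.head_cons,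
        star_one, one_mul, mul_one, _root_.map_smul, inner_smul_left, inner_smul_right,
        ContinuousLinearMap.map_smul]
      rw [← hη, inner_self_eq_norm_sq_to_K]
      push_cast
      ring_nf
      rfl
    rw [e] at h2
    exact h2
  have ha : (⟪η, S.φ s 1 η⟫_ℂ).re ≤ ‖η‖ ^ 2 := by
    have h1 : ‖S.φ s 1 η‖ ≤ ‖η‖ := by
      calc ‖S.φ s 1 η‖ ≤ ‖S.φ s 1‖ * ‖η‖ := (S.φ s 1).le_opNorm η
        _ ≤ 1 * ‖η‖ := mul_le_mul_of_nonneg_right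
              ((S.contractive s hs 1 (one_mem M)).trans ContinuousLinearMap.norm_id_le)
              (norm_nonneg η)
        _ = ‖η‖ := one_mul _
    calc (⟪η, S.φ s 1 η⟫_ℂ).re ≤ ‖⟪η, S.φ s 1 η⟫_ℂ‖ := by
          exact Complex.re_le_norm _
      _ ≤ ‖η‖ * ‖S.φ s 1 η‖ := norm_inner_le_norm _ _
      _ ≤ ‖η‖ * ‖η‖ := mul_le_mul_of_nonneg_left h1 (norm_nonneg η)
      _ = ‖η‖ ^ 2 := (sq ‖η‖).symm
  exact aux_complex _ _ _ _ pos ha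

/-- For every `A ∈ M` and `ξ ∈ H`, the map `t ↦ φ_t(A)ξ` is continuous from the right in
norm: for every `t ≥ 0`, `‖φ_{t+h}(A)ξ − φ_t(A)ξ‖ → 0` as `h → 0+`. -/
theorem cpSemigroup_right_continuous {H : Type*} [NormedAddCommGroup H]
    [InnerProductSpace ℂ H] [CompleteSpace H] {M : VonNeumannAlgebra H}
    (S : CPSemigroup M) (A : H →L[ℂ] H) (hA : A ∈ M) (ξ : H) (t : ℝ) (ht : 0 ≤ t) :
    Filter.Tendsto (fun h : ℝ => ‖S.φ (t + h) A ξ - S.φ t A ξ‖)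
      (nhdsWithin 0 (Set.Ioi 0)) (nhds 0) := by
  set B := S.φ t A with hBdef
  have hBM : B ∈ M := S.mapsTo t ht A hA
  have hBBM : star B * B ∈ M := mul_mem (star_mem hBM) hBM
  -- the dominating function
  set g : ℝ → ℝ := fun h =>
    (⟪ξ, S.φ h (star B * B) ξ⟫_ℂ).re - 2 * (⟪B ξ, S.φ h B ξ⟫_ℂ).re + ‖B ξ‖ ^ 2 with hgdef
  -- g tends to 0 as h → 0⁺
  have hg : Filter.Tendsto g (nhdsWithin 0 (Set.Ioi 0)) (nhds 0) := by
    have h1 : Filter.Tendsto (fun h : ℝ => ⟪ξ, S.φ h (star B * B) ξ⟫_ℂ)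
        (nhdsWithin 0 (Set.Ici 0)) (nhds ⟪ξ, S.φ 0 (star B * B) ξ⟫_ℂ) :=
      S.pointWeakContinuous _ hBBM ξ ξ 0 le_rfl
    have h2 : Filter.Tendsto (fun h : ℝ => ⟪B ξ, S.φ h B ξ⟫_ℂ)
        (nhdsWithin 0 (Set.Ici 0)) (nhds ⟪B ξ, S.φ 0 B ξ⟫_ℂ) :=
      S.pointWeakContinuous _ hBM ξ (B ξ) 0 le_rfl
    have e1 : ⟪ξ, S.φ 0 (star B * B) ξ⟫_ℂ = ((‖B ξ‖ ^ 2 : ℝ) : ℂ) := by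
      rw [S.map_id _ hBBM]
      rw [ContinuousLinearMap.mul_apply, ContinuousLinearMap.star_eq_adjoint,
        ContinuousLinearMap.adjoint_inner_right, inner_self_eq_norm_sq_to_K]
      push_cast
      ring_nf
      rfl
    have e2 : ⟪B ξ, S.φ 0 B ξ⟫_ℂ = ((‖B ξ‖ ^ 2 : ℝ) : ℂ) := by
      rw [S.map_id _ hBM, inner_self_eq_norm_sq_to_K]
      push_cast
      ring_nf
      rfl
    rw [e1] at h1
    rw [e2] at h2
    have hmono : nhdsWithin (0 : ℝ) (Set.Ioi 0) ≤ nhdsWithin 0 (Set.Ici 0) :=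
      nhdsWithin_mono 0 Set.Ioi_subset_Ici_self
    have h1' := (Complex.continuous_re.tendsto _).comp (h1.mono_left hmono)
    have h2' := (Complex.continuous_re.tendsto _).comp (h2.mono_left hmono)
    simp only [Function.comp_def, Complex.ofReal_re] at h1' h2'
    have := (h1'.sub ((h2'.const_mul 2).congr (fun h => (mul_comm _ _)))).add
      (tendsto_const_nhds (x := ‖B ξ‖ ^ 2))
    simp only [hgdef]
    convert this using 2 <;> ring
  -- the squared norm is squeezed between 0 and g
  have hfg : ∀ h ∈ Set.Ioi (0 : ℝ), ‖S.φ (t + h) A ξ - B ξ‖ ^ 2 ≤ g h := by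
    intro h hh
    have hsg : S.φ (t + h) A = S.φ h B := by
      rw [add_comm]
      exact S.semigroup h t (le_of_lt hh) ht A hA
    rw [hsg]
    have expand : ‖S.φ h B ξ - B ξ‖ ^ 2
        = ‖S.φ h B ξ‖ ^ 2 - 2 * (⟪B ξ, S.φ h B ξ⟫_ℂ).re + ‖B ξ‖ ^ 2 := by
      rw [@norm_sub_sq ℂ]
      rw [inner_re_symm]
      norm_num
    rw [expand]
    have := cp_schwarz S h (le_of_lt hh) B hBM ξ
    simp only [hgdef]
    linarith
  have hf : Filter.Tendsto (fun h : ℝ => ‖S.φ (t + h) A ξ - B ξ‖ ^ 2)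
      (nhdsWithin 0 (Set.Ioi 0)) (nhds 0) := by
    refine squeeze_zero' ?_ ?_ hg
    · filter_upwards with h using sq_nonneg _
    · filter_upwards [self_mem_nhdsWithin] with h hh using hfg h hh
  have := (Real.continuous_sqrt.tendsto 0).comp hf
  simp only [Function.comp_def, Real.sqrt_zero] at this
  exact this.congr fun h => Real.sqrt_sq (norm_nonneg _)
end

section
/- Let φ be a CP-semigroup on a von Neumann algebra M ⊆ B(H), let (A_n) be a norm-bounded sequence in M converging to A ∈ M in the σ-strong* topology, and let t₀ ≥ 0. Then for every sequence t_k → t₀ (t_k ≥ 0), every ξ ∈ H and every ε > 0, there exists N ∈ ℕ such that for all n ≥ N, ‖φ_{t_k}(A_n − A)ξ‖ < ε for all k simultaneously (i.e., the convergence φ_{t_k}(A_n − A)ξ → 0 as n → ∞ is uniform in k). -/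
open scoped InnerProductSpace ComplexOrder
open Filter Topology MeasureTheory

/-! ### Auxiliary development

We prove the uniformity lemma via (i) the Cauchy–Schwarz inequality for the completely
positive maps `φ_t`, and (ii) a noncommutative Vitali–Hahn–Saks-type theorem, proved by a
Baire category argument on the positive unit ball of `M` equipped with a σ-strong
pseudometric, using the translation trick `x₀ ↦ (1-Q) x₀ (1-Q)` / `(1-Q) x₀ (1-Q) + Q`. -/

namespace CPUnifAux
set_option linter.unusedSectionVars false
set_option maxHeartbeats 1000000

variable {H : Type*} [NormedAddCommGroup H] [InnerProductSpace ℂ H] [CompleteSpace H]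

lemma min1_le_add {x y z : ℝ} (h : x ≤ y + z) (hy : 0 ≤ y) (hz : 0 ≤ z) :
    min 1 x ≤ min 1 y + min 1 z := by
  rcases le_or_gt 1 y with hy1 | hy1
  · have h' : min 1 y = 1 := min_eq_left hy1
    have : (0:ℝ) ≤ min 1 z := le_min zero_le_one hz
    calc min 1 x ≤ 1 := min_le_left _ _
      _ ≤ min 1 y + min 1 z := by rw [h']; linarith
  · rcases le_or_gt 1 z with hz1 | hz1
    · have h' : min 1 z = 1 := min_eq_left hz1
      have : (0:ℝ) ≤ min 1 y := le_min zero_le_one hy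
      calc min 1 x ≤ 1 := min_le_left _ _
        _ ≤ min 1 y + min 1 z := by rw [h']; linarith
    · have h1 : min 1 y = y := min_eq_right hy1.le
      have h2 : min 1 z = z := min_eq_right hz1.le
      calc min 1 x ≤ x := min_le_right _ _
        _ ≤ y + z := h
        _ = min 1 y + min 1 z := by rw [h1, h2]

lemma lt_of_min1_lt {t ε : ℝ} (hε : ε ≤ 1) (h : min 1 t < ε) : t < ε := by
  rcases le_or_gt t 1 with ht | ht
  · rwa [min_eq_right ht] at h
  · rw [min_eq_left ht.le] at h; linarith

/-- Cauchy–Schwarz-type summability for ℓ² sequences. -/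
lemma summable_norm_mul {u v : ℕ → H} (hu : Summable fun m => ‖u m‖ ^ 2)
    (hv : Summable fun m => ‖v m‖ ^ 2) : Summable fun m => ‖u m‖ * ‖v m‖ := by
  refine Summable.of_nonneg_of_le (fun m => by positivity)
    (fun m => ?_) ((hu.add hv).mul_left (1/2 : ℝ))
  nlinarith [sq_nonneg (‖u m‖ - ‖v m‖), norm_nonneg (u m), norm_nonneg (v m)]

/-- A self-adjoint operator whose quadratic form lies in `[0, ‖h‖²]`. -/
def Pos01 (x : H →L[ℂ] H) : Prop :=
  IsSelfAdjoint x ∧ ∀ h : H, 0 ≤ (⟪h, x h⟫_ℂ).re ∧ (⟪h, x h⟫_ℂ).re ≤ ‖h‖ ^ 2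

lemma sa_inner_shift {x : H →L[ℂ] H} (hx : IsSelfAdjoint x) (g h : H) :
    ⟪x g, h⟫_ℂ = ⟪g, x h⟫_ℂ := by
  have hadj : ContinuousLinearMap.adjoint x = x := by
    rw [← ContinuousLinearMap.star_eq_adjoint]; exact hx
  conv_lhs => rw [← hadj]
  exact ContinuousLinearMap.adjoint_inner_left x h g

lemma Pos01.normsq_le {x : H →L[ℂ] H} (hx : Pos01 x) (h : H) :
    ‖x h‖ ^ 2 ≤ (⟪h, x h⟫_ℂ).re := by
  obtain ⟨hsa, hform⟩ := hx
  have h1 : 0 ≤ (⟪h - x h, x (h - x h)⟫_ℂ).re := (hform (h - x h)).1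
  have h2 : (⟪x h, x (x h)⟫_ℂ).re ≤ ‖x h‖ ^ 2 := (hform (x h)).2
  have e1 : ⟪h, x (x h)⟫_ℂ = ⟪x h, x h⟫_ℂ := (sa_inner_shift hsa h (x h)).symm
  have e2 : ⟪x h, x h⟫_ℂ = (‖x h‖ : ℂ) ^ 2 := inner_self_eq_norm_sq_to_K (x h)
  have expand : ⟪h - x h, x (h - x h)⟫_ℂ
      = ⟪h, x h⟫_ℂ - ⟪h, x (x h)⟫_ℂ - ⟪x h, x h⟫_ℂ + ⟪x h, x (x h)⟫_ℂ := by
    rw [map_sub, inner_sub_left, inner_sub_right, inner_sub_right]; ring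
  rw [expand] at h1
  simp only [Complex.add_re, Complex.sub_re] at h1
  rw [e1, e2] at h1
  have hre : ((‖x h‖ : ℂ) ^ 2).re = ‖x h‖ ^ 2 := by
    norm_cast
  rw [hre] at h1
  linarith

lemma Pos01.norm_le_one {x : H →L[ℂ] H} (hx : Pos01 x) : ‖x‖ ≤ 1 := by
  refine ContinuousLinearMap.opNorm_le_bound x zero_le_one (fun h => ?_)
  rw [one_mul]
  have h1 : ‖x h‖ ^ 2 ≤ ‖h‖ ^ 2 := le_trans (hx.normsq_le h) ((hx.2 h).2)
  nlinarith [norm_nonneg (x h), norm_nonneg h]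

lemma Pos01.one_sub {x : H →L[ℂ] H} (hx : Pos01 x) : Pos01 (1 - x) := by
  refine ⟨(IsSelfAdjoint.one _).sub hx.1, fun h => ?_⟩
  have : ⟪h, (1 - x) h⟫_ℂ = ⟪h, h⟫_ℂ - ⟪h, x h⟫_ℂ := by
    simp [ContinuousLinearMap.sub_apply, inner_sub_right]
  rw [this]
  have hs : ⟪h, h⟫_ℂ = (‖h‖ : ℂ) ^ 2 := inner_self_eq_norm_sq_to_K h
  rw [hs]
  have hre : (((‖h‖ : ℂ) ^ 2).re) = ‖h‖ ^ 2 := by norm_cast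
  constructor
  · simp only [Complex.sub_re]
    rw [hre]
    linarith [(hx.2 h).2]
  · simp only [Complex.sub_re]
    rw [hre]
    linarith [(hx.2 h).1]

/-- The positive unit ball of `M`, as a bare type (so we can endow it with
the σ-strong pseudometric determined by the vector family `w`). -/
structure PB (M : VonNeumannAlgebra H) (w : ℕ → H) : Type _ where
  x : H →L[ℂ] H
  mem : x ∈ M
  p01 : Pos01 x

variable {M : VonNeumannAlgebra H} (w : ℕ → H)

/-- σ-strong pseudo-distance determined by the countable vector family `w`. -/
noncomputable def pbd (y : H →L[ℂ] H) : ℝ := ∑' i, (1/2 : ℝ) ^ i * min 1 ‖y (w i)‖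

lemma pbd_summable (y : H →L[ℂ] H) :
    Summable fun i => (1/2:ℝ)^i * min 1 ‖y (w i)‖ := by
  refine Summable.of_nonneg_of_le (fun i => by positivity) (fun i => ?_) summable_geometric_two
  exact mul_le_of_le_one_right (by positivity) (min_le_left _ _)

lemma pbd_nonneg (y : H →L[ℂ] H) : 0 ≤ pbd w y :=
  tsum_nonneg (fun i => by positivity)

lemma le_pbd (y : H →L[ℂ] H) (i : ℕ) :
    (1/2:ℝ)^i * min 1 ‖y (w i)‖ ≤ pbd w y :=
  Summable.le_tsum (pbd_summable w y) i (fun j _ => by positivity)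

noncomputable instance : PseudoMetricSpace (PB M w) where
  dist a b := pbd w (a.x - b.x)
  dist_self a := by
    show pbd w (a.x - a.x) = 0
    have h0 : ∀ i : ℕ, (1/2:ℝ)^i * min 1 ‖(a.x - a.x) (w i)‖ = 0 := by
      intro i
      rw [sub_self]
      simp
    unfold pbd
    rw [tsum_congr h0, tsum_zero]
  dist_comm a b := by
    show pbd w (a.x - b.x) = pbd w (b.x - a.x)
    have h0 : ∀ i, ‖(a.x - b.x) (w i)‖ = ‖(b.x - a.x) (w i)‖ := by
      intro i
      rw [show a.x - b.x = -(b.x - a.x) by abel]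
      simp [norm_sub_rev]
    unfold pbd
    exact tsum_congr (fun i => by rw [h0 i])
  dist_triangle a b c := by
    show pbd w (a.x - c.x) ≤ pbd w (a.x - b.x) + pbd w (b.x - c.x)
    unfold pbd
    rw [← Summable.tsum_add (pbd_summable w _) (pbd_summable w _)]
    refine Summable.tsum_le_tsum (fun i => ?_) (pbd_summable w _)
      ((pbd_summable w _).add (pbd_summable w _))
    have h1 : ‖(a.x - c.x) (w i)‖ ≤ ‖(a.x - b.x) (w i)‖ + ‖(b.x - c.x) (w i)‖ := by
      have : (a.x - c.x) (w i) = (a.x - b.x) (w i) + (b.x - c.x) (w i) := by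
        simp [ContinuousLinearMap.sub_apply]
      rw [this]; exact norm_add_le _ _
    have := min1_le_add h1 (norm_nonneg _) (norm_nonneg _)
    nlinarith [pow_pos (by norm_num : (0:ℝ) < 1/2) i]

lemma PB.dist_def (a b : PB M w) : dist a b = pbd w (a.x - b.x) := rfl

lemma tendsto_pbd_zero {y : ℕ → H →L[ℂ] H}
    (h : ∀ i, Tendsto (fun n => ‖y n (w i)‖) atTop (𝓝 0)) :
    Tendsto (fun n => pbd w (y n)) atTop (𝓝 0) := by
  have key := tendsto_tsum_of_dominated_convergence
    (𝓕 := (atTop : Filter ℕ))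
    (f := fun n i => (1/2:ℝ)^i * min 1 ‖y n (w i)‖) (g := fun _ => (0:ℝ))
    (bound := fun i => (1/2:ℝ)^i) summable_geometric_two
    (fun i => by
      have hlim : Tendsto (fun n => (1/2:ℝ)^i * ‖y n (w i)‖) atTop (𝓝 0) := by
        have := (h i).const_mul ((1/2:ℝ)^i)
        rwa [mul_zero] at this
      refine squeeze_zero (fun n => by positivity) (fun n => ?_) hlim
      have h1 : min 1 ‖y n (w i)‖ ≤ ‖y n (w i)‖ := min_le_right _ _
      have hp : (0:ℝ) ≤ (1/2:ℝ)^i := by positivity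
      nlinarith)
    (Filter.Eventually.of_forall (fun n i => by
      rw [Real.norm_eq_abs, abs_of_nonneg (by positivity)]
      exact mul_le_of_le_one_right (by positivity) (min_le_left _ _)))
  rw [show (∑' (_ : ℕ), (0:ℝ)) = 0 from tsum_zero] at key
  exact key

lemma tendsto_of_pbd {y : ℕ → H →L[ℂ] H}
    (h : Tendsto (fun n => pbd w (y n)) atTop (𝓝 0)) (i : ℕ) :
    Tendsto (fun n => ‖y n (w i)‖) atTop (𝓝 0) := by
  rw [Metric.tendsto_atTop]
  intro ε hε
  set ε' := min ε 1 with hε'def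
  have hε' : 0 < ε' := lt_min hε one_pos
  have hp : (0:ℝ) < (1/2:ℝ)^i := by positivity
  have hev : ∀ᶠ n in atTop, pbd w (y n) < (1/2:ℝ)^i * ε' :=
    h.eventually (gt_mem_nhds (by positivity))
  rw [Filter.eventually_atTop] at hev
  obtain ⟨N, hN⟩ := hev
  refine ⟨N, fun n hn => ?_⟩
  have h1 := le_pbd w (y n) i
  have h2 : min 1 ‖y n (w i)‖ < ε' := by nlinarith [hN n hn]
  have h3 : ‖y n (w i)‖ < ε' := lt_of_min1_lt (min_le_right ε 1) h2
  rw [Real.dist_eq, sub_zero, abs_of_nonneg (norm_nonneg _)]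
  exact lt_of_lt_of_le h3 (min_le_left ε 1)


instance : CompleteSpace (PB M w) := by
  apply Metric.complete_of_cauchySeq_tendsto
  intro a ha
  have hptC : ∀ i : ℕ, CauchySeq (fun n => (a n).x (w i)) := by
    intro i
    rw [Metric.cauchySeq_iff]
    intro ε hε
    set ε' := min ε 1 with hε'def
    have hε'pos : 0 < ε' := lt_min hε one_pos
    have hp : (0:ℝ) < (1/2:ℝ)^i := by positivity
    obtain ⟨N, hN⟩ := Metric.cauchySeq_iff.mp ha ((1/2:ℝ)^i * ε') (by positivity)
    refine ⟨N, fun m hm n hn => ?_⟩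
    have hd := hN m hm n hn
    rw [PB.dist_def] at hd
    have h1 := le_pbd w ((a m).x - (a n).x) i
    have h2 : min 1 ‖((a m).x - (a n).x) (w i)‖ < ε' := by nlinarith
    have h3 : ‖((a m).x - (a n).x) (w i)‖ < ε' := lt_of_min1_lt (min_le_right ε 1) h2
    rw [dist_eq_norm]
    have he : (a m).x (w i) - (a n).x (w i) = ((a m).x - (a n).x) (w i) := by
      simp [ContinuousLinearMap.sub_apply]
    rw [he]
    exact lt_of_lt_of_le h3 (min_le_left ε 1)
  have hlim : ∀ i, ∃ v, Tendsto (fun n => (a n).x (w i)) atTop (𝓝 v) :=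
    fun i => cauchySeq_tendsto_of_complete (hptC i)
  choose b hb using hlim
  obtain ⟨U, hU⟩ := Ultrafilter.exists_le (atTop : Filter ℕ)
  haveI : (U : Filter ℕ).NeBot := U.neBot
  have hcomp : ∀ h h' : H, ∃ z : ℂ, Tendsto (fun n => ⟪h, (a n).x h'⟫_ℂ) U (𝓝 z) := by
    intro h h'
    have hmem : ∀ n, ⟪h, (a n).x h'⟫_ℂ ∈ Metric.closedBall (0:ℂ) (‖h‖ * ‖h'‖) := by
      intro n
      rw [Metric.mem_closedBall, dist_zero_right]
      calc ‖⟪h, (a n).x h'⟫_ℂ‖ ≤ ‖h‖ * ‖(a n).x h'‖ := norm_inner_le_norm _ _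
        _ ≤ ‖h‖ * ‖h'‖ := by
          have h1 : ‖(a n).x h'‖ ≤ ‖(a n).x‖ * ‖h'‖ := (a n).x.le_opNorm h'
          have h2 : ‖(a n).x‖ ≤ 1 := (a n).p01.norm_le_one
          have h3 : ‖(a n).x h'‖ ≤ ‖h'‖ :=
            le_trans h1 (by nlinarith [norm_nonneg h'])
          exact mul_le_mul_of_nonneg_left h3 (norm_nonneg h)
    obtain ⟨z, _, hzt⟩ := (isCompact_closedBall (0:ℂ) (‖h‖ * ‖h'‖)).ultrafilter_le_nhds
      (U.map fun n => ⟪h, (a n).x h'⟫_ℂ) (by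
        rw [Ultrafilter.coe_map, le_principal_iff, Filter.mem_map]
        exact Filter.univ_mem' hmem)
    exact ⟨z, by rwa [Ultrafilter.coe_map] at hzt⟩
  choose Φ hΦ using hcomp
  have hbd : ∀ h h', ‖Φ h h'‖ ≤ ‖h‖ * ‖h'‖ := by
    intro h h'
    refine le_of_tendsto ((hΦ h h').norm) (Filter.Eventually.of_forall (fun n => ?_))
    calc ‖⟪h, (a n).x h'⟫_ℂ‖ ≤ ‖h‖ * ‖(a n).x h'‖ := norm_inner_le_norm _ _
      _ ≤ ‖h‖ * ‖h'‖ := by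
        have h1 : ‖(a n).x h'‖ ≤ ‖(a n).x‖ * ‖h'‖ := (a n).x.le_opNorm h'
        have h2 : ‖(a n).x‖ ≤ 1 := (a n).p01.norm_le_one
        have h3 : ‖(a n).x h'‖ ≤ ‖h'‖ :=
          le_trans h1 (by nlinarith [norm_nonneg h'])
        exact mul_le_mul_of_nonneg_left h3 (norm_nonneg h)
  have hadd_left : ∀ h₁ h₂ h', Φ (h₁ + h₂) h' = Φ h₁ h' + Φ h₂ h' := by
    intro h₁ h₂ h'
    refine tendsto_nhds_unique (hΦ (h₁ + h₂) h')
      (Filter.Tendsto.congr (fun n => ?_) ((hΦ h₁ h').add (hΦ h₂ h')))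
    rw [inner_add_left]
  have hsmul_left : ∀ (c : ℂ) h h', Φ (c • h) h' = (starRingEnd ℂ) c * Φ h h' := by
    intro c h h'
    refine tendsto_nhds_unique (hΦ (c • h) h')
      (Filter.Tendsto.congr (fun n => ?_) ((hΦ h h').const_mul _))
    rw [inner_smul_left]
  have hadd_right : ∀ h h₁ h₂, Φ h (h₁ + h₂) = Φ h h₁ + Φ h h₂ := by
    intro h h₁ h₂
    refine tendsto_nhds_unique (hΦ h (h₁ + h₂))
      (Filter.Tendsto.congr (fun n => ?_) ((hΦ h h₁).add (hΦ h h₂)))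
    rw [_root_.map_add, inner_add_right]
  have hsmul_right : ∀ (c : ℂ) h h', Φ h (c • h') = c * Φ h h' := by
    intro c h h'
    refine tendsto_nhds_unique (hΦ h (c • h'))
      (Filter.Tendsto.congr (fun n => ?_) ((hΦ h h').const_mul _))
    rw [_root_.map_smul, inner_smul_right]
  have hconjc : ∀ h h', Φ h h' = (starRingEnd ℂ) (Φ h' h) := by
    intro h h'
    refine tendsto_nhds_unique (hΦ h h')
      (Filter.Tendsto.congr (fun n => ?_)
        ((Complex.continuous_conj.tendsto _).comp (hΦ h' h)))
    show (starRingEnd ℂ) ⟪h', (a n).x h⟫_ℂ = ⟪h, (a n).x h'⟫_ℂ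
    rw [inner_conj_symm]
    exact sa_inner_shift (a n).p01.1 h h'
  have hcomm : ∀ y ∈ Set.centralizer (M : Set (H →L[ℂ] H)), ∀ h h',
      Φ h (y h') = Φ ((ContinuousLinearMap.adjoint y) h) h' := by
    intro y hy h h'
    refine tendsto_nhds_unique (hΦ h (y h'))
      (Filter.Tendsto.congr (fun n => ?_) (hΦ ((ContinuousLinearMap.adjoint y) h) h'))
    have hc : (a n).x * y = y * (a n).x := hy (a n).x ((a n).mem)
    calc ⟪(ContinuousLinearMap.adjoint y) h, (a n).x h'⟫_ℂ
        = ⟪h, y ((a n).x h')⟫_ℂ := ContinuousLinearMap.adjoint_inner_left y ((a n).x h') h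
      _ = ⟪h, (y * (a n).x) h'⟫_ℂ := rfl
      _ = ⟪h, ((a n).x * y) h'⟫_ℂ := by rw [hc]
      _ = ⟪h, (a n).x (y h')⟫_ℂ := rfl
  have hBv : ∀ h' : H, ∃ v : H, ∀ h : H, ⟪h, v⟫_ℂ = Φ h h' := by
    intro h'
    have hlin : IsLinearMap ℂ (fun h => (starRingEnd ℂ) (Φ h h')) :=
      ⟨fun h₁ h₂ => by rw [hadd_left, map_add],
       fun c h => by rw [hsmul_left]; simp⟩
    have hLb : ∀ h : H, ‖IsLinearMap.mk' _ hlin h‖ ≤ ‖h'‖ * ‖h‖ := by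
      intro h
      show ‖(starRingEnd ℂ) (Φ h h')‖ ≤ _
      rw [RCLike.norm_conj]
      calc ‖Φ h h'‖ ≤ ‖h‖ * ‖h'‖ := hbd h h'
        _ = ‖h'‖ * ‖h‖ := mul_comm _ _
    refine ⟨(InnerProductSpace.toDual ℂ H).symm
      (LinearMap.mkContinuous (IsLinearMap.mk' _ hlin) ‖h'‖ hLb), fun h => ?_⟩
    have h1 : ⟪(InnerProductSpace.toDual ℂ H).symm
        (LinearMap.mkContinuous (IsLinearMap.mk' _ hlin) ‖h'‖ hLb), h⟫_ℂ
        = (starRingEnd ℂ) (Φ h h') := InnerProductSpace.toDual_symm_apply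
    calc ⟪h, _⟫_ℂ = (starRingEnd ℂ) ⟪(InnerProductSpace.toDual ℂ H).symm
          (LinearMap.mkContinuous (IsLinearMap.mk' _ hlin) ‖h'‖ hLb), h⟫_ℂ :=
        (inner_conj_symm _ _).symm
      _ = (starRingEnd ℂ) ((starRingEnd ℂ) (Φ h h')) := by rw [h1]
      _ = Φ h h' := by simp
  choose Bv hBvs using hBv
  have hBvadd : ∀ x y : H, Bv (x + y) = Bv x + Bv y := by
    intro x y
    refine ext_inner_left ℂ (fun v => ?_)
    rw [hBvs, inner_add_right, hBvs, hBvs, hadd_right]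
  have hBvsmul : ∀ (c : ℂ) (x : H), Bv (c • x) = c • Bv x := by
    intro c x
    refine ext_inner_left ℂ (fun v => ?_)
    rw [hBvs, inner_smul_right, hBvs, hsmul_right]
  have hBvnorm : ∀ x : H, ‖Bv x‖ ≤ 1 * ‖x‖ := by
    intro x
    rw [one_mul]
    have h1 : ((‖Bv x‖ : ℂ)) ^ 2 = Φ (Bv x) x := by
      rw [← hBvs x (Bv x)]
      exact (inner_self_eq_norm_sq_to_K (Bv x)).symm
    have h2 : ‖Bv x‖ ^ 2 ≤ ‖Bv x‖ * ‖x‖ := by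
      have hb' := hbd (Bv x) x
      rw [← h1] at hb'
      have hn : ‖((‖Bv x‖ : ℂ)) ^ 2‖ = ‖Bv x‖ ^ 2 := by
        rw [norm_pow, Complex.norm_real, Real.norm_eq_abs, abs_of_nonneg (norm_nonneg _)]
      rwa [hn] at hb'
    rcases eq_or_lt_of_le (norm_nonneg (Bv x)) with h0 | h0
    · rw [← h0]; exact norm_nonneg x
    · nlinarith
  refine ?_
  set Blm : H →ₗ[ℂ] H :=
    { toFun := Bv, map_add' := hBvadd, map_smul' := hBvsmul } with hBlm
  set B : H →L[ℂ] H := LinearMap.mkContinuous Blm 1 hBvnorm with hBdef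
  have hBap : ∀ h h', ⟪h, B h'⟫_ℂ = Φ h h' := fun h h' => hBvs h' h
  have hBmem : B ∈ M := by
    have hcc : B ∈ Set.centralizer (Set.centralizer (M : Set (H →L[ℂ] H))) := by
      intro y hy
      refine ContinuousLinearMap.ext (fun h' => ?_)
      refine ext_inner_left ℂ (fun g => ?_)
      have e1 : ⟪g, (y * B) h'⟫_ℂ = ⟪(ContinuousLinearMap.adjoint y) g, B h'⟫_ℂ :=
        (ContinuousLinearMap.adjoint_inner_left y (B h') g).symm
      have e2 : ⟪g, (B * y) h'⟫_ℂ = Φ g (y h') := hBap g (y h')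
      rw [e1, hBap, e2, hcomm y hy]
    rw [← SetLike.mem_coe, ← M.centralizer_centralizer]
    exact hcc
  have hBsa : IsSelfAdjoint B := by
    have heq : B = ContinuousLinearMap.adjoint B := by
      rw [ContinuousLinearMap.eq_adjoint_iff]
      intro x y
      calc ⟪B x, y⟫_ℂ = (starRingEnd ℂ) ⟪y, B x⟫_ℂ := (inner_conj_symm _ _).symm
        _ = (starRingEnd ℂ) (Φ y x) := by rw [hBap]
        _ = Φ x y := (hconjc x y).symm
        _ = ⟪x, B y⟫_ℂ := (hBap x y).symm
    show star B = B
    rw [ContinuousLinearMap.star_eq_adjoint]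
    exact heq.symm
  have hBre : ∀ h : H, 0 ≤ (⟪h, B h⟫_ℂ).re ∧ (⟪h, B h⟫_ℂ).re ≤ ‖h‖ ^ 2 := by
    intro h
    have hre : Tendsto (fun n => (⟪h, (a n).x h⟫_ℂ).re) U (𝓝 ((Φ h h).re)) :=
      (Complex.continuous_re.tendsto _).comp (hΦ h h)
    have hΦval : (⟪h, B h⟫_ℂ) = Φ h h := hBap h h
    constructor
    · rw [hΦval]
      exact ge_of_tendsto hre (Filter.Eventually.of_forall fun n => ((a n).p01.2 h).1)
    · rw [hΦval]
      exact le_of_tendsto hre (Filter.Eventually.of_forall fun n => ((a n).p01.2 h).2)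
  refine ⟨⟨B, hBmem, hBsa, hBre⟩, ?_⟩
  have hBw : ∀ i, B (w i) = b i := by
    intro i
    refine ext_inner_left ℂ (fun g => ?_)
    have h1 : Tendsto (fun n => ⟪g, (a n).x (w i)⟫_ℂ) atTop (𝓝 ⟪g, b i⟫_ℂ) :=
      tendsto_const_nhds.inner (hb i)
    have h2 : Tendsto (fun n => ⟪g, (a n).x (w i)⟫_ℂ) U (𝓝 ⟪g, b i⟫_ℂ) :=
      h1.mono_left hU
    rw [hBap]
    exact tendsto_nhds_unique (hΦ g (w i)) h2
  rw [tendsto_iff_dist_tendsto_zero]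
  have hptl : ∀ i, Tendsto (fun n => ‖((a n).x - B) (w i)‖) atTop (𝓝 0) := by
    intro i
    have he : ∀ n, ‖((a n).x - B) (w i)‖ = ‖(a n).x (w i) - b i‖ := by
      intro n; rw [ContinuousLinearMap.sub_apply, hBw i]
    have h3 : Tendsto (fun n => ‖(a n).x (w i) - b i‖) atTop (𝓝 0) :=
      (tendsto_iff_norm_sub_tendsto_zero).mp (hb i)
    exact h3.congr (fun n => (he n).symm)
  exact tendsto_pbd_zero w hptl


/-- A normal functional annihilates bounded sequences tending strongly to `0`. -/
lemma rho_null (ρ : (H →L[ℂ] H) →ₗ[ℂ] ℂ) {u v : ℕ → H}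
    (hu : Summable fun m => ‖u m‖ ^ 2) (hv : Summable fun m => ‖v m‖ ^ 2)
    (hrep : ∀ x ∈ M, ρ x = ∑' m, ⟪u m, x (v m)⟫_ℂ)
    {Q : ℕ → H →L[ℂ] H} (hQm : ∀ n, Q n ∈ M) (hQb : ∀ n, ‖Q n‖ ≤ 1)
    (hQ0 : ∀ h : H, Tendsto (fun n => ‖Q n h‖) atTop (𝓝 0)) :
    Tendsto (fun n => ρ (Q n)) atTop (𝓝 0) := by
  have key := tendsto_tsum_of_dominated_convergence
    (𝓕 := (atTop : Filter ℕ))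
    (f := fun n m => ⟪u m, Q n (v m)⟫_ℂ) (g := fun _ => (0:ℂ))
    (bound := fun m => ‖u m‖ * ‖v m‖) (summable_norm_mul hu hv)
    (fun m => by
      rw [tendsto_zero_iff_norm_tendsto_zero]
      refine squeeze_zero (g := fun n => ‖u m‖ * ‖Q n (v m)‖)
        (fun n => norm_nonneg _) (fun n => norm_inner_le_norm _ _) ?_
      have := (hQ0 (v m)).const_mul ‖u m‖
      rwa [mul_zero] at this)
    (Filter.Eventually.of_forall (fun n m => by
      calc ‖⟪u m, Q n (v m)⟫_ℂ‖ ≤ ‖u m‖ * ‖Q n (v m)‖ := norm_inner_le_norm _ _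
        _ ≤ ‖u m‖ * ‖v m‖ := by
          have h1 : ‖Q n (v m)‖ ≤ ‖Q n‖ * ‖v m‖ := (Q n).le_opNorm (v m)
          have h2 : ‖Q n (v m)‖ ≤ ‖v m‖ :=
            le_trans h1 (by nlinarith [norm_nonneg (v m), hQb n])
          exact mul_le_mul_of_nonneg_left h2 (norm_nonneg _)))
  rw [show (∑' (_ : ℕ), (0:ℂ)) = 0 from tsum_zero] at key
  exact key.congr (fun n => (hrep (Q n) (hQm n)).symm)

/-- Evaluation of a normal functional is continuous on the positive ball
with the σ-strong pseudometric (if the metric sees the representing vectors). -/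
lemma cont_eval (ρ : (H →L[ℂ] H) →ₗ[ℂ] ℂ) {u v : ℕ → H}
    (hu : Summable fun m => ‖u m‖ ^ 2) (hv : Summable fun m => ‖v m‖ ^ 2)
    (hrep : ∀ x ∈ M, ρ x = ∑' m, ⟪u m, x (v m)⟫_ℂ)
    (hw : ∀ m, ∃ i, w i = v m) :
    Continuous fun a : PB M w => ρ a.x := by
  rw [continuous_iff_seqContinuous]
  intro s a hs
  have hd : Tendsto (fun n => pbd w ((s n).x - a.x)) atTop (𝓝 0) := by
    have := (tendsto_iff_dist_tendsto_zero).mp hs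
    exact this
  have hcomp : ∀ m, Tendsto (fun n => ‖((s n).x - a.x) (v m)‖) atTop (𝓝 0) := by
    intro m
    obtain ⟨i, hi⟩ := hw m
    have := tendsto_of_pbd w hd i
    rwa [hi] at this
  have h1 := tendsto_tsum_of_dominated_convergence
    (𝓕 := (atTop : Filter ℕ))
    (f := fun n m => ⟪u m, (s n).x (v m)⟫_ℂ) (g := fun m => ⟪u m, a.x (v m)⟫_ℂ)
    (bound := fun m => ‖u m‖ * ‖v m‖) (summable_norm_mul hu hv)
    (fun m => by
      rw [tendsto_iff_norm_sub_tendsto_zero]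
      refine squeeze_zero (g := fun n => ‖u m‖ * ‖((s n).x - a.x) (v m)‖)
        (fun n => norm_nonneg _) (fun n => ?_) ?_
      · show ‖⟪u m, (s n).x (v m)⟫_ℂ - ⟪u m, a.x (v m)⟫_ℂ‖ ≤ ‖u m‖ * ‖((s n).x - a.x) (v m)‖
        rw [← inner_sub_right]
        have he : (s n).x (v m) - a.x (v m) = ((s n).x - a.x) (v m) := by
          simp [ContinuousLinearMap.sub_apply]
        rw [he]
        exact norm_inner_le_norm _ _
      · have := (hcomp m).const_mul ‖u m‖
        rwa [mul_zero] at this)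
    (Filter.Eventually.of_forall (fun n m => by
      calc ‖⟪u m, (s n).x (v m)⟫_ℂ‖ ≤ ‖u m‖ * ‖(s n).x (v m)‖ := norm_inner_le_norm _ _
        _ ≤ ‖u m‖ * ‖v m‖ := by
          have h1 : ‖(s n).x (v m)‖ ≤ ‖(s n).x‖ * ‖v m‖ := (s n).x.le_opNorm (v m)
          have h2 : ‖(s n).x‖ ≤ 1 := (s n).p01.norm_le_one
          have h3 : ‖(s n).x (v m)‖ ≤ ‖v m‖ :=
            le_trans h1 (by nlinarith [norm_nonneg (v m)])
          exact mul_le_mul_of_nonneg_left h3 (norm_nonneg _)))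
  have h2 : Tendsto (fun n => ρ (s n).x) atTop (𝓝 (∑' m, ⟪u m, a.x (v m)⟫_ℂ)) :=
    h1.congr (fun n => (hrep (s n).x (s n).mem).symm)
  rw [← hrep a.x a.mem] at h2
  exact h2

/-- The translation elements stay in the positive unit ball. -/
lemma pos01_z {x q : H →L[ℂ] H} (hx : Pos01 x) (hq : Pos01 q) :
    Pos01 ((1 - q) * x * (1 - q)) := by
  have hg : Pos01 (1 - q) := hq.one_sub
  constructor
  · show star ((1 - q) * x * (1 - q)) = (1 - q) * x * (1 - q)
    rw [star_mul, star_mul, hg.1, hx.1, mul_assoc]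
  · intro h
    have he : ⟪h, ((1 - q) * x * (1 - q)) h⟫_ℂ = ⟪(1 - q) h, x ((1 - q) h)⟫_ℂ := by
      show ⟪h, (1 - q) (x ((1 - q) h))⟫_ℂ = _
      exact (sa_inner_shift hg.1 h (x ((1 - q) h))).symm
    rw [he]
    refine ⟨(hx.2 _).1, le_trans (hx.2 _).2 ?_⟩
    calc ‖(1 - q) h‖ ^ 2 ≤ (⟪h, (1 - q) h⟫_ℂ).re := hg.normsq_le h
      _ ≤ ‖h‖ ^ 2 := (hg.2 h).2

lemma pos01_y {x q : H →L[ℂ] H} (hx : Pos01 x) (hq : Pos01 q) :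
    Pos01 ((1 - q) * x * (1 - q) + q) := by
  have hz := pos01_z hx hq
  have hg : Pos01 (1 - q) := hq.one_sub
  constructor
  · exact hz.1.add hq.1
  · intro h
    have hsum : ⟪h, ((1 - q) * x * (1 - q) + q) h⟫_ℂ
        = ⟪h, ((1 - q) * x * (1 - q)) h⟫_ℂ + ⟪h, q h⟫_ℂ := by
      rw [ContinuousLinearMap.add_apply, inner_add_right]
    rw [hsum, Complex.add_re]
    constructor
    · exact add_nonneg (hz.2 h).1 (hq.2 h).1
    · -- sharp bound
      have he : ⟪h, ((1 - q) * x * (1 - q)) h⟫_ℂ = ⟪(1 - q) h, x ((1 - q) h)⟫_ℂ := by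
        show ⟪h, (1 - q) (x ((1 - q) h))⟫_ℂ = _
        exact (sa_inner_shift hg.1 h (x ((1 - q) h))).symm
      have h1 : (⟪h, ((1 - q) * x * (1 - q)) h⟫_ℂ).re ≤ ‖(1 - q) h‖ ^ 2 := by
        rw [he]; exact (hx.2 _).2
      have hgh : (1 - q) h = h - q h := by
        simp [ContinuousLinearMap.sub_apply]
      have h2 : ‖(1 - q) h‖ ^ 2
          = ‖h‖ ^ 2 - 2 * (⟪h, q h⟫_ℂ).re + ‖q h‖ ^ 2 := by
        rw [hgh]
        have := @norm_sub_sq ℂ _ _ _ _ h (q h)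
        rw [this]
        norm_num [RCLike.re_to_complex]
      have h3 : ‖q h‖ ^ 2 ≤ (⟪h, q h⟫_ℂ).re := hq.normsq_le h
      linarith

/-- **Noncommutative Vitali–Hahn–Saks.** If a sequence of normal functionals on `M`
converges pointwise on `M`, then it annihilates positive contractive sequences in `M`
tending strongly to `0`, uniformly. -/
lemma key (M : VonNeumannAlgebra H) (ρ : ℕ → (H →L[ℂ] H) →ₗ[ℂ] ℂ)
    (hnorm : ∀ j, ∃ u v : ℕ → H, (Summable fun m => ‖u m‖ ^ 2) ∧
      (Summable fun m => ‖v m‖ ^ 2) ∧ ∀ x ∈ M, ρ j x = ∑' m, ⟪u m, x (v m)⟫_ℂ)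
    (hpt : ∀ x ∈ M, ∃ l, Tendsto (fun j => ρ j x) atTop (𝓝 l))
    (Q : ℕ → H →L[ℂ] H) (hQm : ∀ n, Q n ∈ M) (hQp : ∀ n, Pos01 (Q n))
    (hQ0 : ∀ h : H, Tendsto (fun n => ‖Q n h‖) atTop (𝓝 0))
    (ε : ℝ) (hε : 0 < ε) :
    ∃ n₀ : ℕ, ∀ n ≥ n₀, ∀ j, ‖ρ j (Q n)‖ < ε := by
  classical
  choose u v hu hv hrep using hnorm
  set w : ℕ → H := fun i => v (Nat.unpair i).1 (Nat.unpair i).2 with hwdef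
  have hwm : ∀ j m, ∃ i, w i = v j m := by
    intro j m
    exact ⟨Nat.pair j m, by simp [hwdef]⟩
  set ε' := ε / 4 with hε'def
  have hε'pos : 0 < ε' := by positivity
  have hcont : ∀ j, Continuous fun a : PB M w => (ρ j) a.x :=
    fun j => cont_eval w (ρ j) (hu j) (hv j) (hrep j) (hwm j)
  set F : ℕ → Set (PB M w) := fun N =>
    {a : PB M w | ∀ j, N ≤ j → ∀ k, N ≤ k → ‖ρ j a.x - ρ k a.x‖ ≤ ε'} with hFdef
  have hFclosed : ∀ N, IsClosed (F N) := by
    intro N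
    have heq : F N = ⋂ (j : ℕ) (_ : N ≤ j) (k : ℕ) (_ : N ≤ k),
        {a : PB M w | ‖ρ j a.x - ρ k a.x‖ ≤ ε'} := by
      ext a
      simp only [hFdef, Set.mem_setOf_eq, Set.mem_iInter]
    rw [heq]
    exact isClosed_iInter fun j => isClosed_iInter fun _ =>
      isClosed_iInter fun k => isClosed_iInter fun _ =>
        isClosed_le (Continuous.norm ((hcont j).sub (hcont k))) continuous_const
  have hFcover : ⋃ N, F N = Set.univ := by
    ext a
    simp only [Set.mem_iUnion, Set.mem_univ, iff_true]
    obtain ⟨l, hl⟩ := hpt a.x a.mem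
    obtain ⟨N, hN⟩ := Metric.cauchySeq_iff.mp hl.cauchySeq ε' hε'pos
    refine ⟨N, fun j hj k hk => ?_⟩
    have := hN j hj k hk
    rw [dist_eq_norm] at this
    exact this.le
  haveI : Nonempty (PB M w) := by
    refine ⟨⟨0, zero_mem M, ?_, fun h => ?_⟩⟩
    · show star (0 : H →L[ℂ] H) = 0
      simp
    · simp
  obtain ⟨N, hNne⟩ := nonempty_interior_of_iUnion_of_closed hFclosed hFcover
  obtain ⟨x₀, hx₀⟩ := hNne
  rw [mem_interior_iff_mem_nhds, Metric.mem_nhds_iff] at hx₀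
  obtain ⟨δ, hδ, hball⟩ := hx₀
  -- translated elements
  have hmem1q : ∀ n, (1 : H →L[ℂ] H) - Q n ∈ M := fun n => sub_mem (one_mem M) (hQm n)
  have hmemz : ∀ n, ((1 : H →L[ℂ] H) - Q n) * x₀.x * (1 - Q n) ∈ M :=
    fun n => mul_mem (mul_mem (hmem1q n) x₀.mem) (hmem1q n)
  set zn : ℕ → PB M w := fun n =>
    ⟨(1 - Q n) * x₀.x * (1 - Q n), hmemz n, pos01_z x₀.p01 (hQp n)⟩ with hzn
  set yn : ℕ → PB M w := fun n =>
    ⟨(1 - Q n) * x₀.x * (1 - Q n) + Q n, add_mem (hmemz n) (hQm n),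
      pos01_y x₀.p01 (hQp n)⟩ with hyn
  -- distance control
  have hzdiff : ∀ n (g : H),
      ‖((zn n).x - x₀.x) g‖ ≤ ‖Q n (x₀.x g)‖ + 2 * ‖Q n g‖ := by
    intro n g
    have hexp : (zn n).x - x₀.x
        = -(Q n * x₀.x) - x₀.x * Q n + Q n * x₀.x * Q n := by
      show (1 - Q n) * x₀.x * (1 - Q n) - x₀.x = _
      noncomm_ring
    rw [hexp]
    have h1 : ‖x₀.x‖ ≤ 1 := x₀.p01.norm_le_one
    have h2 : ‖Q n‖ ≤ 1 := (hQp n).norm_le_one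
    have happ : (-(Q n * x₀.x) - x₀.x * Q n + Q n * x₀.x * Q n) g
        = -(Q n (x₀.x g)) - x₀.x (Q n g) + Q n (x₀.x (Q n g)) := by
      simp [ContinuousLinearMap.sub_apply, ContinuousLinearMap.add_apply,
        ContinuousLinearMap.mul_apply, ContinuousLinearMap.neg_apply]
    rw [happ]
    have hb1 : ‖x₀.x (Q n g)‖ ≤ ‖Q n g‖ := by
      have := x₀.x.le_opNorm (Q n g)
      nlinarith [norm_nonneg (Q n g)]
    have hb2 : ‖Q n (x₀.x (Q n g))‖ ≤ ‖Q n g‖ := by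
      have hc1 := (Q n).le_opNorm (x₀.x (Q n g))
      have hc2 : ‖Q n (x₀.x (Q n g))‖ ≤ ‖x₀.x (Q n g)‖ := by
        nlinarith [norm_nonneg (x₀.x (Q n g))]
      exact le_trans hc2 hb1
    calc ‖-(Q n (x₀.x g)) - x₀.x (Q n g) + Q n (x₀.x (Q n g))‖
        ≤ ‖-(Q n (x₀.x g)) - x₀.x (Q n g)‖ + ‖Q n (x₀.x (Q n g))‖ := norm_add_le _ _
      _ ≤ ‖-(Q n (x₀.x g))‖ + ‖x₀.x (Q n g)‖ + ‖Q n (x₀.x (Q n g))‖ := by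
          have := norm_sub_le (-(Q n (x₀.x g))) (x₀.x (Q n g))
          linarith
      _ ≤ ‖Q n (x₀.x g)‖ + 2 * ‖Q n g‖ := by
          rw [norm_neg]
          linarith
  have hydiff : ∀ n (g : H),
      ‖((yn n).x - x₀.x) g‖ ≤ ‖Q n (x₀.x g)‖ + 3 * ‖Q n g‖ := by
    intro n g
    have hexp : (yn n).x - x₀.x = ((zn n).x - x₀.x) + Q n := by
      show (1 - Q n) * x₀.x * (1 - Q n) + Q n - x₀.x
          = ((1 - Q n) * x₀.x * (1 - Q n) - x₀.x) + Q n
      abel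
    rw [hexp]
    have happ : (((zn n).x - x₀.x) + Q n) g = ((zn n).x - x₀.x) g + Q n g := by
      simp [ContinuousLinearMap.add_apply]
    rw [happ]
    calc ‖((zn n).x - x₀.x) g + Q n g‖ ≤ ‖((zn n).x - x₀.x) g‖ + ‖Q n g‖ := norm_add_le _ _
      _ ≤ ‖Q n (x₀.x g)‖ + 3 * ‖Q n g‖ := by
          have := hzdiff n g
          linarith
  have hzd : Tendsto (fun n => dist (zn n) x₀) atTop (𝓝 0) := by
    refine tendsto_pbd_zero w (fun i => ?_)
    refine squeeze_zero (g := fun n => ‖Q n (x₀.x (w i))‖ + 2 * ‖Q n (w i)‖)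
      (fun n => norm_nonneg _) (fun n => hzdiff n (w i)) ?_
    have h1 := hQ0 (x₀.x (w i))
    have h2 := (hQ0 (w i)).const_mul (2:ℝ)
    rw [mul_zero] at h2
    have := h1.add h2
    rwa [add_zero] at this
  have hyd : Tendsto (fun n => dist (yn n) x₀) atTop (𝓝 0) := by
    refine tendsto_pbd_zero w (fun i => ?_)
    refine squeeze_zero (g := fun n => ‖Q n (x₀.x (w i))‖ + 3 * ‖Q n (w i)‖)
      (fun n => norm_nonneg _) (fun n => hydiff n (w i)) ?_
    have h1 := hQ0 (x₀.x (w i))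
    have h2 := (hQ0 (w i)).const_mul (3:ℝ)
    rw [mul_zero] at h2
    have := h1.add h2
    rwa [add_zero] at this
  obtain ⟨n₁, hn₁⟩ := Filter.eventually_atTop.mp
    ((hzd.eventually (gt_mem_nhds hδ)).and (hyd.eventually (gt_mem_nhds hδ)))
  -- individual functionals annihilate Q n
  have hsingle : ∀ j, Tendsto (fun n => ‖ρ j (Q n)‖) atTop (𝓝 0) := by
    intro j
    have := (rho_null (M := M) (ρ j) (hu j) (hv j) (hrep j) hQm
      (fun n => (hQp n).norm_le_one) hQ0).norm
    rwa [norm_zero] at this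
  have hev2 : ∀ᶠ n in atTop, ∀ j ∈ Finset.range (N+1), ‖ρ j (Q n)‖ < ε' := by
    rw [Filter.eventually_all_finset]
    intro j _
    exact (hsingle j).eventually (gt_mem_nhds hε'pos)
  obtain ⟨n₂, hn₂⟩ := Filter.eventually_atTop.mp hev2
  refine ⟨max n₁ n₂, fun n hn j => ?_⟩
  have hnn₁ : n₁ ≤ n := le_trans (le_max_left _ _) hn
  have hnn₂ : n₂ ≤ n := le_trans (le_max_right _ _) hn
  rcases le_or_gt j N with hj | hj
  · have := hn₂ n hnn₂ j (Finset.mem_range.mpr (Nat.lt_succ_of_le hj))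
    calc ‖ρ j (Q n)‖ < ε' := this
      _ ≤ ε := by rw [hε'def]; linarith
  · have hjN : N ≤ j := hj.le
    have hzF : zn n ∈ F N := hball (Metric.mem_ball.mpr (hn₁ n hnn₁).1)
    have hyF : yn n ∈ F N := hball (Metric.mem_ball.mpr (hn₁ n hnn₁).2)
    have hy' : ‖ρ j (yn n).x - ρ N (yn n).x‖ ≤ ε' := hyF j hjN N le_rfl
    have hz' : ‖ρ j (zn n).x - ρ N (zn n).x‖ ≤ ε' := hzF j hjN N le_rfl
    have hdiff : ρ j (Q n) - ρ N (Q n)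
        = (ρ j (yn n).x - ρ N (yn n).x) - (ρ j (zn n).x - ρ N (zn n).x) := by
      have hyz : (yn n).x = (zn n).x + Q n := rfl
      rw [hyz, map_add, map_add]
      ring
    have hNn : ‖ρ N (Q n)‖ < ε' := hn₂ n hnn₂ N (Finset.mem_range.mpr (Nat.lt_succ_of_le le_rfl))
    calc ‖ρ j (Q n)‖ = ‖(ρ j (Q n) - ρ N (Q n)) + ρ N (Q n)‖ := by ring_nf
      _ ≤ ‖ρ j (Q n) - ρ N (Q n)‖ + ‖ρ N (Q n)‖ := norm_add_le _ _
      _ ≤ ‖ρ j (yn n).x - ρ N (yn n).x‖ + ‖ρ j (zn n).x - ρ N (zn n).x‖ + ‖ρ N (Q n)‖ := by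
          rw [hdiff]
          have := norm_sub_le (ρ j (yn n).x - ρ N (yn n).x) (ρ j (zn n).x - ρ N (zn n).x)
          linarith
      _ < ε' + ε' + ε' := by linarith
      _ ≤ ε := by rw [hε'def]; linarith

variable {M : VonNeumannAlgebra H}

/-- positivity of single diagonal CP matrix entries -/
lemma cp_diag (S : CPSemigroup M) {t : ℝ} (ht : 0 ≤ t) {x : H →L[ℂ] H} (hx : x ∈ M)
    (χ : H) : 0 ≤ ⟪χ, S.φ t (star x * x) χ⟫_ℂ := by
  have := S.completelyPositive t ht 1 (fun _ => x) (fun _ => hx) (fun _ => χ)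
  simpa using this

/-- The CP–Schwarz inequality for `φ_t`, evaluated at a vector. -/
lemma cp_schwarz (S : CPSemigroup M) {t : ℝ} (ht : 0 ≤ t) {x : H →L[ℂ] H} (hx : x ∈ M)
    (ξ : H) : ‖S.φ t x ξ‖ ^ 2 ≤ (⟪ξ, S.φ t (star x * x) ξ⟫_ℂ).re := by
  set χ : H := S.φ t x ξ with hχ
  have hG : ∀ c : ℂ, 0 ≤ (starRingEnd ℂ) c * c * ⟪χ, S.φ t 1 χ⟫_ℂ
      + ((starRingEnd ℂ) c * ⟪χ, S.φ t x ξ⟫_ℂ + (c * ⟪ξ, S.φ t (star x) χ⟫_ℂ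
      + ⟪ξ, S.φ t (star x * x) ξ⟫_ℂ)) := by
    intro c
    have h2 := S.completelyPositive t ht 2 ![1, x]
      (by
        intro i
        fin_cases i
        · simpa using one_mem M
        · simpa using hx)
      ![c • χ, ξ]
    rw [Fin.sum_univ_two, Fin.sum_univ_two, Fin.sum_univ_two] at h2
    simp only [Matrix.cons_val_zero, Matrix.cons_val_one, Matrix.head_cons,
      star_one, one_mul, mul_one] at h2
    have e00 : ⟪c • χ, S.φ t 1 (c • χ)⟫_ℂ = (starRingEnd ℂ) c * c * ⟪χ, S.φ t 1 χ⟫_ℂ := by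
      rw [(S.φ t 1).map_smul, inner_smul_left, inner_smul_right]; ring
    have e01 : ⟪c • χ, S.φ t x ξ⟫_ℂ = (starRingEnd ℂ) c * ⟪χ, S.φ t x ξ⟫_ℂ :=
      inner_smul_left _ _ _
    have e10 : ⟪ξ, S.φ t (star x) (c • χ)⟫_ℂ = c * ⟪ξ, S.φ t (star x) χ⟫_ℂ := by
      rw [(S.φ t (star x)).map_smul, inner_smul_right]
    rw [e00, e01, e10] at h2
    convert h2 using 1
    ring
  have hP : 0 ≤ ⟪χ, S.φ t 1 χ⟫_ℂ := by
    have := cp_diag S ht (one_mem M) χ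
    rwa [star_one, one_mul] at this
  have hS0 : 0 ≤ ⟪ξ, S.φ t (star x * x) ξ⟫_ℂ := cp_diag S ht hx ξ
  set P := ⟪χ, S.φ t 1 χ⟫_ℂ with hPdef
  set A0 := ⟪χ, S.φ t x ξ⟫_ℂ with hA0def
  set B0 := ⟪ξ, S.φ t (star x) χ⟫_ℂ with hB0def
  set S0 := ⟪ξ, S.φ t (star x * x) ξ⟫_ℂ with hS0def
  have hA0 : A0 = ((‖χ‖ : ℂ)) ^ 2 := by
    rw [show A0 = ⟪χ, χ⟫_ℂ from rfl]
    exact inner_self_eq_norm_sq_to_K χ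
  have hPim : P.im = 0 := ((Complex.le_def.mp hP).2).symm.trans rfl |>.symm ▸ by
    have := (Complex.le_def.mp hP).2
    simpa using this.symm
  have hS0im : S0.im = 0 := by
    have := (Complex.le_def.mp hS0).2
    simpa using this.symm
  have hA0im : A0.im = 0 := by rw [hA0]; norm_cast
  have hA0re : A0.re = ‖χ‖ ^ 2 := by rw [hA0]; norm_cast
  have hB0im : B0.im = 0 := by
    have h1 := (Complex.le_def.mp (hG 1)).2
    simp only [map_one, one_mul, Complex.zero_im, Complex.add_im, hPim, hA0im, hS0im] at h1
    linarith [h1]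
  have hB0re : B0.re = ‖χ‖ ^ 2 := by
    have h1 := (Complex.le_def.mp (hG Complex.I)).2
    simp only [Complex.zero_im, Complex.add_im, Complex.mul_im, Complex.mul_re,
      Complex.conj_re, Complex.conj_im, Complex.I_re, Complex.I_im, hPim, hS0im,
      hA0im, hB0im] at h1
    -- h1 should reduce to a linear relation between A0.re and B0.re
    rw [← hA0re]
    nlinarith [h1, hPim, Complex.normSq_nonneg P]
  have hneg := (Complex.le_def.mp (hG (-1))).1
  simp only [map_neg, map_one, Complex.add_re, Complex.zero_re] at hneg
  have hPre : P.re ≤ ‖χ‖ ^ 2 := by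
    have hb1 : ‖P‖ ≤ ‖χ‖ * ‖S.φ t 1 χ‖ := by
      exact norm_inner_le_norm _ _
    have hb2 : ‖S.φ t 1 χ‖ ≤ ‖χ‖ := by
      have hc1 : ‖S.φ t (1 : H →L[ℂ] H)‖ ≤ ‖(1 : H →L[ℂ] H)‖ :=
        S.contractive t ht 1 (one_mem M)
      have hc2 : ‖(1 : H →L[ℂ] H)‖ ≤ 1 := ContinuousLinearMap.norm_id_le
      have := (S.φ t 1).le_opNorm χ
      nlinarith [norm_nonneg χ]
    have := Complex.re_le_norm P
    nlinarith [norm_nonneg χ, norm_nonneg P]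
  -- put together
  have hexp : ((-1 : ℂ) * A0).re = -A0.re := by simp
  -- hneg : 0 ≤ ((conj (-1)) * (-1) * P).re + ((conj (-1)) * A0 + ((-1) * B0 + S0)).re
  -- simplify and conclude
  have hfin : 0 ≤ P.re - A0.re - B0.re + S0.re := by
    have h2 := (Complex.le_def.mp (hG (-1))).1
    simp only [map_neg, map_one, Complex.zero_re, Complex.add_re, Complex.mul_re,
      Complex.neg_re, Complex.neg_im, Complex.one_re, Complex.one_im, hPim, hA0im,
      hB0im, hS0im] at h2
    nlinarith [h2]
  linarith [hfin, hPre, hA0re, hB0re]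


end CPUnifAux

open CPUnifAux in
/-- **Uniformity lemma.** Let `(Aₙ)` be a norm-bounded sequence in `M` converging to `A` in
the σ-strong* topology, `t₀ ≥ 0` and `t_k → t₀`. Then for every `ξ ∈ H` and `ε > 0` there
is `N` such that `‖φ_{t_k}(Aₙ − A)ξ‖ < ε` for all `n ≥ N` and all `k` simultaneously. -/
theorem cpSemigroup_uniformity {H : Type*} [NormedAddCommGroup H]
    [InnerProductSpace ℂ H] [CompleteSpace H] {M : VonNeumannAlgebra H}
    (S : CPSemigroup M) (A : ℕ → H →L[ℂ] H) (L : H →L[ℂ] H)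
    (hmem : ∀ n, A n ∈ M) (hL : L ∈ M)
    (C : ℝ) (hbd : ∀ n, ‖A n‖ ≤ C) (hconv : SigmaStrongStarTendsto A L)
    (t₀ : ℝ) (ht₀ : 0 ≤ t₀) (t : ℕ → ℝ) (ht : ∀ k, 0 ≤ t k)
    (htt : Filter.Tendsto t Filter.atTop (nhds t₀)) (ξ : H) (ε : ℝ) (hε : 0 < ε) :
    ∃ N : ℕ, ∀ n ≥ N, ∀ k, ‖S.φ (t k) (A n - L) ξ‖ < ε := by
  classical
  set Bop : ℕ → (H →L[ℂ] H) := fun n => A n - L with hBop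
  have hBmem : ∀ n, Bop n ∈ M := fun n => sub_mem (hmem n) hL
  set R : ℝ := C + ‖L‖ with hR
  have hRB : ∀ n, ‖Bop n‖ ≤ R := fun n =>
    le_trans (norm_sub_le _ _) (by have := hbd n; rw [hR]; linarith)
  have hR0 : 0 ≤ R := le_trans (norm_nonneg (Bop 0)) (hRB 0)
  set c : ℝ := max (R ^ 2) 1 with hc
  have hc1 : (1:ℝ) ≤ c := le_max_right _ _
  have hc0 : (0:ℝ) < c := lt_of_lt_of_le one_pos hc1
  have hcR : R ^ 2 ≤ c := le_max_left _ _
  -- strong nullity of Bop at every vector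
  have hnull2 : ∀ h : H, Tendsto (fun n => ‖Bop n h‖ ^ 2) atTop (𝓝 0) := by
    intro h
    set ξs : ℕ → H := fun k => if k = 0 then h else 0 with hξs
    have hsum : Summable fun k => ‖ξs k‖ ^ 2 := by
      apply summable_of_ne_finset_zero (s := ({0} : Finset ℕ))
      intro k hk
      have : k ≠ 0 := by simpa using hk
      simp [hξs, this]
    have hcv := hconv ξs hsum
    have e1 : ∀ n, (∑' k, ‖A n (ξs k) - L (ξs k)‖ ^ 2) = ‖A n h - L h‖ ^ 2 := by
      intro n
      rw [tsum_eq_single 0 (fun b hb => by simp [hξs, hb])]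
      simp [hξs]
    have e2 : ∀ n, (∑' k, ‖star (A n) (ξs k) - star L (ξs k)‖ ^ 2)
        = ‖star (A n) h - star L h‖ ^ 2 := by
      intro n
      rw [tsum_eq_single 0 (fun b hb => by simp [hξs, hb])]
      simp [hξs]
    have hcv' : Tendsto (fun n => ‖A n h - L h‖ ^ 2 + ‖star (A n) h - star L h‖ ^ 2)
        atTop (𝓝 0) := by
      refine hcv.congr (fun n => ?_)
      rw [e1 n, e2 n]
    refine squeeze_zero (fun n => by positivity) (fun n => ?_) hcv'
    have happ : Bop n h = A n h - L h := by simp [hBop, ContinuousLinearMap.sub_apply]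
    rw [happ]
    nlinarith [sq_nonneg (‖star (A n) h - star L h‖), norm_nonneg (star (A n) h - star L h)]
  have hnull : ∀ h : H, Tendsto (fun n => ‖Bop n h‖) atTop (𝓝 0) := by
    intro h
    have hsq := (Real.continuous_sqrt.tendsto 0).comp (hnull2 h)
    rw [Real.sqrt_zero] at hsq
    refine hsq.congr (fun n => ?_)
    show Real.sqrt (‖Bop n h‖ ^ 2) = ‖Bop n h‖
    rw [Real.sqrt_sq (norm_nonneg _)]
  -- the positive contractions
  set Q : ℕ → (H →L[ℂ] H) := fun n => ((c : ℂ))⁻¹ • (star (Bop n) * Bop n) with hQ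
  have hQm : ∀ n, Q n ∈ M := by
    intro n
    have h1 : star (Bop n) * Bop n ∈ M := mul_mem (star_mem (hBmem n)) (hBmem n)
    have h2 := M.toStarSubalgebra.toSubalgebra.smul_mem
      (x := star (Bop n) * Bop n) h1 ((c : ℂ))⁻¹
    exact h2
  have hQinner : ∀ n (h : H), ⟪h, Q n h⟫_ℂ = ((c : ℂ))⁻¹ * ((‖Bop n h‖ : ℂ)) ^ 2 := by
    intro n h
    have h1 : Q n h = ((c : ℂ))⁻¹ • ((star (Bop n) * Bop n) h) := rfl
    rw [h1, inner_smul_right]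
    congr 1
    have h2 : (star (Bop n) * Bop n) h = star (Bop n) (Bop n h) := rfl
    rw [h2, ContinuousLinearMap.star_eq_adjoint, ContinuousLinearMap.adjoint_inner_right]
    exact inner_self_eq_norm_sq_to_K _
  have hQre : ∀ n (h : H), (⟪h, Q n h⟫_ℂ).re = c⁻¹ * ‖Bop n h‖ ^ 2 := by
    intro n h
    rw [hQinner n h]
    have : ((c : ℂ))⁻¹ * ((‖Bop n h‖ : ℂ)) ^ 2 = (((c⁻¹ * ‖Bop n h‖ ^ 2 : ℝ)) : ℂ) := by
      push_cast; ring
    rw [this, Complex.ofReal_re]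
  have hQp : ∀ n, Pos01 (Q n) := by
    intro n
    constructor
    · show star (Q n) = Q n
      rw [hQ]
      simp only [star_smul, star_mul, star_star]
      congr 1
      rw [star_inv₀]
      congr 1
      exact Complex.conj_ofReal c
    · intro h
      rw [hQre n h]
      constructor
      · positivity
      · have h1 : ‖Bop n h‖ ≤ R * ‖h‖ := by
          have := (Bop n).le_opNorm h
          have := hRB n
          nlinarith [norm_nonneg h]
        have h2 : ‖Bop n h‖ ^ 2 ≤ c * ‖h‖ ^ 2 := by nlinarith [norm_nonneg h, norm_nonneg (Bop n h)]
        have h3 : c⁻¹ * ‖Bop n h‖ ^ 2 ≤ c⁻¹ * (c * ‖h‖ ^ 2) :=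
          mul_le_mul_of_nonneg_left h2 (by positivity)
        calc c⁻¹ * ‖Bop n h‖ ^ 2 ≤ c⁻¹ * (c * ‖h‖ ^ 2) := h3
          _ = ‖h‖ ^ 2 := by field_simp
  have hQ0 : ∀ h : H, Tendsto (fun n => ‖Q n h‖) atTop (𝓝 0) := by
    intro h
    refine squeeze_zero (g := fun n => c⁻¹ * (R * ‖Bop n h‖)) (fun n => norm_nonneg _)
      (fun n => ?_) ?_
    · have h1 : Q n h = ((c : ℂ))⁻¹ • (star (Bop n) (Bop n h)) := rfl
      rw [h1, norm_smul]
      have h2 : ‖((c : ℂ))⁻¹‖ = c⁻¹ := by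
        rw [norm_inv, Complex.norm_real, Real.norm_eq_abs, abs_of_pos hc0]
      rw [h2]
      have h3 : ‖star (Bop n) (Bop n h)‖ ≤ R * ‖Bop n h‖ := by
        have ha := (star (Bop n)).le_opNorm (Bop n h)
        have hb : ‖star (Bop n)‖ = ‖Bop n‖ := norm_star _
        have := hRB n
        nlinarith [norm_nonneg (Bop n h)]
      have hcinv : (0:ℝ) ≤ c⁻¹ := by positivity
      exact mul_le_mul_of_nonneg_left h3 hcinv
    · have := ((hnull h).const_mul R).const_mul c⁻¹
      simpa using this
  -- the functionals
  set ρ : ℕ → (H →L[ℂ] H) →ₗ[ℂ] ℂ := fun k =>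
    { toFun := fun x => ⟪ξ, S.φ (t k) x ξ⟫_ℂ
      map_add' := fun x y => by
        show ⟪ξ, S.φ (t k) (x + y) ξ⟫_ℂ = ⟪ξ, S.φ (t k) x ξ⟫_ℂ + ⟪ξ, S.φ (t k) y ξ⟫_ℂ
        rw [_root_.map_add, ContinuousLinearMap.add_apply, inner_add_right]
      map_smul' := fun a x => by
        show ⟪ξ, S.φ (t k) (a • x) ξ⟫_ℂ = a * ⟪ξ, S.φ (t k) x ξ⟫_ℂ
        rw [_root_.map_smul, ContinuousLinearMap.smul_apply, inner_smul_right] }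
    with hρ
  have hωnorm : NormalFunctionalOn (M : Set (H →L[ℂ] H)) (fun X => ⟪ξ, X ξ⟫_ℂ) := by
    set ξs : ℕ → H := fun m => if m = 0 then ξ else 0 with hξs
    have hsum : Summable fun m => ‖ξs m‖ ^ 2 := by
      apply summable_of_ne_finset_zero (s := ({0} : Finset ℕ))
      intro m hm
      have : m ≠ 0 := by simpa using hm
      simp [hξs, this]
    refine ⟨ξs, ξs, hsum, hsum, fun X _ => ?_⟩
    rw [tsum_eq_single 0 (fun b hb => by simp [hξs, hb])]
    simp [hξs]
  have hnormρ : ∀ j, ∃ u v : ℕ → H, (Summable fun m => ‖u m‖ ^ 2) ∧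
      (Summable fun m => ‖v m‖ ^ 2) ∧ ∀ x ∈ M, ρ j x = ∑' m, ⟪u m, x (v m)⟫_ℂ := by
    intro j
    have := S.normal (t j) (ht j) (fun X => ⟪ξ, X ξ⟫_ℂ) hωnorm
    obtain ⟨u, v, hu, hv, hrep⟩ := this
    exact ⟨u, v, hu, hv, fun x hx => hrep x hx⟩
  have hpt : ∀ x ∈ M, ∃ l, Tendsto (fun j => ρ j x) atTop (𝓝 l) := by
    intro x hx
    refine ⟨⟪ξ, S.φ t₀ x ξ⟫_ℂ, ?_⟩
    have htt' : Tendsto t atTop (nhdsWithin t₀ (Set.Ici 0)) :=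
      tendsto_nhdsWithin_iff.mpr ⟨htt, Filter.Eventually.of_forall (fun k => ht k)⟩
    exact (S.pointWeakContinuous x hx ξ ξ t₀ ht₀).comp htt'
  -- apply the key lemma
  have hε' : 0 < ε ^ 2 / (2 * c) := by positivity
  obtain ⟨n₀, hn₀⟩ := key M ρ hnormρ hpt Q hQm hQp hQ0 (ε ^ 2 / (2 * c)) hε'
  refine ⟨n₀, fun n hn k => ?_⟩
  have hsch := cp_schwarz S (ht k) (hBmem n) ξ
  -- relate ρ k (Q n) to the Schwarz bound
  have hrel : ⟪ξ, S.φ (t k) (star (Bop n) * Bop n) ξ⟫_ℂ = (c : ℂ) * ρ k (Q n) := by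
    have h1 : ρ k (Q n) = ((c : ℂ))⁻¹ * ⟪ξ, S.φ (t k) (star (Bop n) * Bop n) ξ⟫_ℂ := by
      show ⟪ξ, S.φ (t k) (((c : ℂ))⁻¹ • (star (Bop n) * Bop n)) ξ⟫_ℂ = _
      rw [_root_.map_smul, ContinuousLinearMap.smul_apply, inner_smul_right]
    rw [h1]
    have hc' : (c : ℂ) ≠ 0 := by
      simp only [ne_eq, Complex.ofReal_eq_zero]
      exact ne_of_gt hc0
    field_simp
  have hre : (⟪ξ, S.φ (t k) (star (Bop n) * Bop n) ξ⟫_ℂ).re ≤ c * ‖ρ k (Q n)‖ := by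
    rw [hrel]
    have h1 : ((c : ℂ) * ρ k (Q n)).re ≤ ‖(c : ℂ) * ρ k (Q n)‖ := by
      have := Complex.abs_re_le_norm ((c : ℂ) * ρ k (Q n))
      exact le_trans (le_abs_self _) this
    calc ((c : ℂ) * ρ k (Q n)).re ≤ ‖(c : ℂ) * ρ k (Q n)‖ := h1
      _ = c * ‖ρ k (Q n)‖ := by
          rw [norm_mul, Complex.norm_real, Real.norm_eq_abs, abs_of_pos hc0]
  have hlt : c * ‖ρ k (Q n)‖ < ε ^ 2 / 2 := by
    have := hn₀ n hn k
    calc c * ‖ρ k (Q n)‖ < c * (ε ^ 2 / (2 * c)) := by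
          exact mul_lt_mul_of_pos_left this hc0
      _ = ε ^ 2 / 2 := by field_simp
  have hfin : ‖S.φ (t k) (Bop n) ξ‖ ^ 2 < ε ^ 2 := by
    calc ‖S.φ (t k) (Bop n) ξ‖ ^ 2 ≤ (⟪ξ, S.φ (t k) (star (Bop n) * Bop n) ξ⟫_ℂ).re := hsch
      _ ≤ c * ‖ρ k (Q n)‖ := hre
      _ < ε ^ 2 / 2 := hlt
      _ < ε ^ 2 := by nlinarith
  have := lt_of_pow_lt_pow_left₀ 2 (le_of_lt hε) hfin
  exact this
end
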